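/- arXiv:1301.6378 — 6 statements merged into one kernel-verified Lean document; each statement's English description precedes it below -/
import Mathlib

section
/- (Sharpness of the Poincaré constant, Proposition 4.3) Suppose κ ≥ 0 is a constant such that ∫_ℝ h(x)² w(x)² dx ≤ κ ∫_ℝ h'(x)² w(x)² dx holds for every continuously differentiable h : ℝ → ℝ with h and h' bounded and ∫_ℝ h(x) w(x)² dx = 0. Then κ ≥ 4/(3k²). -/
open Real MeasureTheory

/-- The wave number `k = sqrt(b/(2ν))`. -/
noncomputable def waveK (ν b : ℝ) : ℝ := Real.sqrt (b / (2 * ν))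

/-- The travelling wave profile `v(x) = (1 + exp(-k x))⁻¹`. -/
noncomputable def twProfile (ν b : ℝ) (x : ℝ) : ℝ :=
  (1 + Real.exp (-(waveK ν b) * x))⁻¹

/-- `w = v' = k v (1 - v)`. -/
noncomputable def twW (ν b : ℝ) (x : ℝ) : ℝ :=
  waveK ν b * twProfile ν b x * (1 - twProfile ν b x)

open Filter

/-! ### Auxiliary lemmas -/

lemma twW_formula (ν b : ℝ) (x : ℝ) :
    twW ν b x = (waveK ν b / 2) / (2 * Real.cosh (waveK ν b / 2 * x) ^ 2) := by
  set k := waveK ν b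
  have hsplit : -k * x = -(k/2*x) + -(k/2*x) := by ring
  have hP : Real.exp (k/2*x) ≠ 0 := (Real.exp_pos _).ne'
  have hden : 1 + Real.exp (-k * x) ≠ 0 := by positivity
  have hE : Real.exp (-(k/2*x)) = (Real.exp (k/2*x))⁻¹ := Real.exp_neg _
  rw [twW, twProfile, Real.cosh_eq, hsplit, Real.exp_add, hE]
  rw [hsplit, Real.exp_add, hE] at hden
  field_simp
  ring

lemma tanh_eq_aux (y : ℝ) : Real.tanh y = (1 - Real.exp (-2*y)) / (1 + Real.exp (-2*y)) := by
  have h1 : Real.exp (-2*y) = Real.exp (-y) * Real.exp (-y) := by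
    rw [← Real.exp_add]; ring_nf
  have h2 : Real.exp (-y) = (Real.exp y)⁻¹ := Real.exp_neg _
  have hP : Real.exp y ≠ 0 := (Real.exp_pos _).ne'
  have hden : 1 + Real.exp (-2*y) ≠ 0 := by positivity
  rw [Real.tanh_eq_sinh_div_cosh, Real.sinh_eq, Real.cosh_eq]
  rw [h1, h2] at hden ⊢
  have hc : Real.exp y + (Real.exp y)⁻¹ ≠ 0 := by positivity
  field_simp

lemma tendsto_tanh_atTop' : Tendsto Real.tanh atTop (nhds 1) := by
  have h : Tendsto (fun y : ℝ => Real.exp (-2*y)) atTop (nhds 0) := by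
    apply Real.tendsto_exp_atBot.comp
    exact (tendsto_const_mul_atBot_of_neg (by norm_num)).mpr tendsto_id
  have hcont : ContinuousAt (fun u : ℝ => (1 - u) / (1 + u)) 0 := by
    apply ContinuousAt.div
    · fun_prop
    · fun_prop
    · norm_num
  have h2 := hcont.tendsto.comp h
  have heq : Real.tanh = ((fun u : ℝ => (1 - u) / (1 + u)) ∘ fun y : ℝ => Real.exp (-2*y)) := by
    funext y; simp [Function.comp, tanh_eq_aux]
  rw [heq]
  simpa using h2

lemma tendsto_tanh_atBot' : Tendsto Real.tanh atBot (nhds (-1)) := by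
  have h : Tendsto (fun y : ℝ => -Real.tanh (-y)) atBot (nhds (-1)) := by
    apply Tendsto.neg
    exact tendsto_tanh_atTop'.comp tendsto_neg_atBot_atTop
  simpa [Real.tanh_neg] using h

lemma hasDerivAt_tanh' (y : ℝ) : HasDerivAt Real.tanh (1 / Real.cosh y ^ 2) y := by
  have h := ((Real.hasDerivAt_sinh y).div (Real.hasDerivAt_cosh y) (Real.cosh_pos y).ne')
  have heq : (Real.cosh y * Real.cosh y - Real.sinh y * Real.sinh y) / Real.cosh y ^ 2
      = 1 / Real.cosh y ^ 2 := by
    rw [show Real.cosh y * Real.cosh y - Real.sinh y * Real.sinh y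
        = Real.cosh y ^ 2 - Real.sinh y ^ 2 by ring, Real.cosh_sq_sub_sinh_sq]
  rw [heq] at h
  have hfun : (fun x => Real.sinh x / Real.cosh x) = Real.tanh := by
    funext x; exact (Real.tanh_eq_sinh_div_cosh x).symm
  rw [← hfun]; exact h

lemma one_div_cosh_sq_le (t : ℝ) : 1 / Real.cosh t ^ 2 ≤ 4 * Real.exp (-2 * t) := by
  have h1 : Real.exp t / 2 ≤ Real.cosh t := by
    rw [Real.cosh_eq]
    have := (Real.exp_pos (-t)).le
    linarith
  have h2 : (Real.exp t / 2) ^ 2 ≤ Real.cosh t ^ 2 := by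
    apply pow_le_pow_left₀ (by positivity) h1
  have h3 : (0:ℝ) < (Real.exp t / 2) ^ 2 := by positivity
  calc 1 / Real.cosh t ^ 2 ≤ 1 / (Real.exp t / 2) ^ 2 := by
        apply one_div_le_one_div_of_le h3 h2
    _ = 4 * Real.exp (-2 * t) := by
        rw [div_pow, one_div, show Real.exp (-2*t) = (Real.exp t ^ 2)⁻¹ by
          rw [← Real.exp_nat_mul]; rw [← Real.exp_neg]; ring_nf]
        field_simp
        norm_num

lemma integrable_sech_sq {c : ℝ} (hc : 0 < c) :
    Integrable (fun x : ℝ => 1 / Real.cosh (c * x) ^ 2) := by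
  have hcont : Continuous (fun x : ℝ => 1 / Real.cosh (c * x) ^ 2) := by
    apply Continuous.div continuous_const
    · fun_prop
    · intro x; positivity
  apply hcont.locallyIntegrable.integrable_of_isBigO_atTop_of_norm_isNegInvariant
      (g := fun x : ℝ => Real.exp (-(2*c) * x))
  · apply Filter.Eventually.of_forall
    intro x
    simp [Function.comp, mul_neg, Real.cosh_neg]
  · apply Asymptotics.IsBigO.of_bound 4
    apply Filter.Eventually.of_forall
    intro x
    have := one_div_cosh_sq_le (c * x)
    have h2 : Real.exp (-2 * (c*x)) = Real.exp (-(2*c)*x) := by ring_nf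
    rw [Real.norm_eq_abs, Real.norm_eq_abs, abs_of_nonneg (by positivity),
      abs_of_nonneg (Real.exp_pos _).le]
    rw [← h2]; exact this
  · exact ⟨Set.Ioi 0, Ioi_mem_atTop 0, exp_neg_integrableOn_Ioi 0 (by positivity)⟩

section CFixed

variable {c : ℝ} (hc : 0 < c)
include hc

lemma tendsto_tanh_mul_atTop : Tendsto (fun x : ℝ => Real.tanh (c * x)) atTop (nhds 1) :=
  tendsto_tanh_atTop'.comp (tendsto_id.const_mul_atTop hc)

lemma tendsto_tanh_mul_atBot : Tendsto (fun x : ℝ => Real.tanh (c * x)) atBot (nhds (-1)) :=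
  tendsto_tanh_atBot'.comp (tendsto_id.const_mul_atBot hc)

omit hc in
lemma hasDerivAt_tanh_mul (x : ℝ) :
    HasDerivAt (fun x : ℝ => Real.tanh (c * x)) (c / Real.cosh (c * x) ^ 2) x := by
  have h := (hasDerivAt_tanh' (c * x)).comp x ((hasDerivAt_id x).const_mul c)
  refine h.congr_deriv ?_
  simp [mul_comm, mul_one, div_eq_mul_inv]

lemma integrable_f1 : Integrable (fun x : ℝ =>
    Real.sinh (c*x) ^ 2 * (c / (2 * Real.cosh (c*x) ^ 2)) ^ 2) := by
  apply Integrable.mono' ((integrable_sech_sq hc).const_mul (c^2/4))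
  · apply Continuous.aestronglyMeasurable
    apply Continuous.mul (by fun_prop)
    apply Continuous.pow
    apply Continuous.div continuous_const (by fun_prop)
    intro x; positivity
  · apply Filter.Eventually.of_forall
    intro x
    have hcsh := Real.cosh_pos (c*x)
    have hs : Real.sinh (c*x) ^ 2 ≤ Real.cosh (c*x) ^ 2 := by
      nlinarith [Real.cosh_sq_sub_sinh_sq (c*x)]
    rw [Real.norm_eq_abs, abs_of_nonneg (by positivity)]
    have key : Real.sinh (c*x) ^ 2 * (c / (2 * Real.cosh (c*x) ^ 2)) ^ 2
        ≤ Real.cosh (c*x) ^ 2 * (c / (2 * Real.cosh (c*x) ^ 2)) ^ 2 := by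
      apply mul_le_mul_of_nonneg_right hs (by positivity)
    refine key.trans (le_of_eq ?_)
    have h4 := pow_ne_zero 2 hcsh.ne'
    field_simp
    ring

lemma integrable_f2 : Integrable (fun x : ℝ =>
    (c * Real.cosh (c*x)) ^ 2 * (c / (2 * Real.cosh (c*x) ^ 2)) ^ 2) := by
  have heq : (fun x : ℝ => (c * Real.cosh (c*x)) ^ 2 * (c / (2 * Real.cosh (c*x) ^ 2)) ^ 2)
      = fun x : ℝ => (c^4/4) * (1 / Real.cosh (c*x) ^ 2) := by
    funext x
    have hcsh := (Real.cosh_pos (c*x)).ne'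
    field_simp
    ring
  rw [heq]
  exact (integrable_sech_sq hc).const_mul _

lemma integral_f1 : ∫ x : ℝ, Real.sinh (c*x) ^ 2 * (c / (2 * Real.cosh (c*x) ^ 2)) ^ 2 = c/6 := by
  have hF : ∀ x : ℝ, HasDerivAt (fun x : ℝ => (c/12) * Real.tanh (c*x) ^ 3)
      (Real.sinh (c*x) ^ 2 * (c / (2 * Real.cosh (c*x) ^ 2)) ^ 2) x := by
    intro x
    have h := (((hasDerivAt_tanh_mul (c := c) x).pow 3).const_mul (c/12))
    refine h.congr_deriv ?_
    have hcsh := (Real.cosh_pos (c*x)).ne'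
    rw [Real.tanh_eq_sinh_div_cosh]
    push_cast
    field_simp
    ring
  have hbot : Tendsto (fun x : ℝ => (c/12) * Real.tanh (c*x) ^ 3) atBot (nhds (-(c/12))) := by
    have := ((tendsto_tanh_mul_atBot hc).pow 3).const_mul (c/12)
    convert this using 2
    ring
  have htop : Tendsto (fun x : ℝ => (c/12) * Real.tanh (c*x) ^ 3) atTop (nhds (c/12)) := by
    have := ((tendsto_tanh_mul_atTop hc).pow 3).const_mul (c/12)
    convert this using 2
    ring
  rw [MeasureTheory.integral_of_hasDerivAt_of_tendsto hF (integrable_f1 hc) hbot htop]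
  ring

lemma integral_f2 : ∫ x : ℝ, (c * Real.cosh (c*x)) ^ 2 * (c / (2 * Real.cosh (c*x) ^ 2)) ^ 2
    = c^3/2 := by
  have hF : ∀ x : ℝ, HasDerivAt (fun x : ℝ => (c^3/4) * Real.tanh (c*x))
      ((c * Real.cosh (c*x)) ^ 2 * (c / (2 * Real.cosh (c*x) ^ 2)) ^ 2) x := by
    intro x
    have h := (hasDerivAt_tanh_mul (c := c) x).const_mul (c^3/4)
    have heq : c^3/4 * (c / Real.cosh (c*x) ^ 2)
        = (c * Real.cosh (c*x)) ^ 2 * (c / (2 * Real.cosh (c*x) ^ 2)) ^ 2 := by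
      have hcsh := (Real.cosh_pos (c*x)).ne'
      field_simp
      ring
    rwa [heq] at h
  have hbot : Tendsto (fun x : ℝ => (c^3/4) * Real.tanh (c*x)) atBot (nhds (-(c^3/4))) := by
    have := (tendsto_tanh_mul_atBot hc).const_mul (c^3/4)
    convert this using 1
    ring
  have htop : Tendsto (fun x : ℝ => (c^3/4) * Real.tanh (c*x)) atTop (nhds (c^3/4)) := by
    have := (tendsto_tanh_mul_atTop hc).const_mul (c^3/4)
    simpa using this
  rw [MeasureTheory.integral_of_hasDerivAt_of_tendsto hF (integrable_f2 hc) hbot htop]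
  ring

end CFixed

/-! ### The test functions -/

noncomputable def Htest (c ε : ℝ) (x : ℝ) : ℝ :=
  Real.sinh (c*x) * Real.exp (-ε * Real.cosh (c*x))

noncomputable def Dtest (c ε : ℝ) (x : ℝ) : ℝ :=
  (c * Real.cosh (c*x) - ε * c * Real.sinh (c*x) ^ 2) * Real.exp (-ε * Real.cosh (c*x))

lemma hasDerivAt_Htest (c ε x : ℝ) : HasDerivAt (Htest c ε) (Dtest c ε x) x := by
  have hs : HasDerivAt (fun x : ℝ => Real.sinh (c*x)) (Real.cosh (c*x) * c) x :=
    (Real.hasDerivAt_sinh (c*x)).comp x (by simpa using (hasDerivAt_id x).const_mul c)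
  have hch : HasDerivAt (fun x : ℝ => Real.cosh (c*x)) (Real.sinh (c*x) * c) x :=
    (Real.hasDerivAt_cosh (c*x)).comp x (by simpa using (hasDerivAt_id x).const_mul c)
  have hexp : HasDerivAt (fun x : ℝ => Real.exp (-ε * Real.cosh (c*x)))
      (Real.exp (-ε * Real.cosh (c*x)) * (-ε * (Real.sinh (c*x) * c))) x :=
    (Real.hasDerivAt_exp _).comp x (hch.const_mul (-ε))
  have h := hs.mul hexp
  refine h.congr_deriv ?_
  unfold Dtest
  ring

lemma contDiff_Htest (c ε : ℝ) : ContDiff ℝ 1 (Htest c ε) := by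
  unfold Htest
  apply ContDiff.mul
  · exact Real.contDiff_sinh.comp (contDiff_const.mul contDiff_id)
  · exact Real.contDiff_exp.comp (contDiff_const.mul
      (Real.contDiff_cosh.comp (contDiff_const.mul contDiff_id)))

lemma deriv_Htest (c ε : ℝ) : deriv (Htest c ε) = Dtest c ε := by
  funext x; exact (hasDerivAt_Htest c ε x).deriv

lemma mul_exp_le' (ε y : ℝ) (hε : 0 < ε) : y * Real.exp (-ε * y) ≤ 1/ε := by
  have h1 : ε * y ≤ Real.exp (ε * y) := by
    have := Real.add_one_le_exp (ε * y)
    linarith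
  have hexp := Real.exp_pos (ε*y)
  have h2 : ε * (y * Real.exp (-ε * y)) ≤ 1 := by
    rw [show -ε*y = -(ε*y) by ring, Real.exp_neg, ← mul_assoc]
    rw [mul_inv_le_iff₀ hexp, one_mul]
    exact h1
  calc y * Real.exp (-ε*y) = (ε * (y * Real.exp (-ε*y)))/ε := by field_simp
    _ ≤ 1/ε := by gcongr

lemma abs_Htest_le (c ε : ℝ) (hε : 0 < ε) (x : ℝ) : |Htest c ε x| ≤ 1/ε := by
  unfold Htest
  rw [abs_mul, abs_of_nonneg (Real.exp_pos _).le]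
  have h1 : |Real.sinh (c*x)| ≤ Real.cosh (c*x) := by
    rw [Real.abs_sinh]
    calc Real.sinh |c*x| ≤ Real.cosh |c*x| := (Real.sinh_lt_cosh _).le
      _ = Real.cosh (c*x) := by rw [Real.cosh_abs]
  calc |Real.sinh (c*x)| * Real.exp (-ε * Real.cosh (c*x))
      ≤ Real.cosh (c*x) * Real.exp (-ε * Real.cosh (c*x)) :=
        mul_le_mul_of_nonneg_right h1 (Real.exp_pos _).le
    _ ≤ 1/ε := mul_exp_le' ε _ hε

lemma abs_Dtest_le_bound (c ε : ℝ) (hc : 0 < c) (hε : 0 < ε) (x : ℝ) :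
    |Dtest c ε x| ≤ 2 * c * Real.cosh (c*x) := by
  unfold Dtest
  rw [abs_mul, abs_of_nonneg (Real.exp_pos _).le]
  have hcsh := Real.cosh_pos (c*x)
  have hs2 : Real.sinh (c*x) ^ 2 ≤ Real.cosh (c*x) ^ 2 := by
    nlinarith [Real.cosh_sq_sub_sinh_sq (c*x)]
  have hub : ε * c * Real.sinh (c*x) ^ 2 ≤ ε * c * Real.cosh (c*x) ^ 2 :=
    mul_le_mul_of_nonneg_left hs2 (by positivity)
  have h1 : |c * Real.cosh (c*x) - ε * c * Real.sinh (c*x) ^ 2|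
      ≤ c * Real.cosh (c*x) + ε * c * Real.cosh (c*x) ^ 2 := by
    rw [abs_le]
    constructor <;> nlinarith [sq_nonneg (Real.sinh (c*x)), sq_nonneg (Real.cosh (c*x)),
      mul_pos hε hc]
  have hexple : Real.exp (-ε * Real.cosh (c*x)) ≤ 1 := by
    apply Real.exp_le_one_iff.mpr
    nlinarith
  have h2 : ε * Real.cosh (c*x) * Real.exp (-ε * Real.cosh (c*x)) ≤ 1 := by
    have := mul_exp_le' ε (Real.cosh (c*x)) hε
    calc ε * Real.cosh (c*x) * Real.exp (-ε * Real.cosh (c*x)) ≤ ε * (1/ε) := by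
          rw [mul_assoc]
          apply mul_le_mul_of_nonneg_left this hε.le
      _ = 1 := by field_simp
  calc |c * Real.cosh (c*x) - ε * c * Real.sinh (c*x) ^ 2| * Real.exp (-ε * Real.cosh (c*x))
      ≤ (c * Real.cosh (c*x) + ε * c * Real.cosh (c*x) ^ 2) * Real.exp (-ε * Real.cosh (c*x)) :=
        mul_le_mul_of_nonneg_right h1 (Real.exp_pos _).le
    _ = c * Real.cosh (c*x) * Real.exp (-ε * Real.cosh (c*x))
        + c * Real.cosh (c*x) * (ε * Real.cosh (c*x) * Real.exp (-ε * Real.cosh (c*x))) := by ring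
    _ ≤ c * Real.cosh (c*x) * 1 + c * Real.cosh (c*x) * 1 := by
        apply add_le_add
        · apply mul_le_mul_of_nonneg_left hexple (by positivity)
        · apply mul_le_mul_of_nonneg_left h2 (by positivity)
    _ = 2 * c * Real.cosh (c*x) := by ring

lemma abs_Dtest_le_const (c ε : ℝ) (hc : 0 < c) (hε : 0 < ε) (x : ℝ) :
    |Dtest c ε x| ≤ 5 * c / ε := by
  unfold Dtest
  have hcsh := Real.cosh_pos (c*x)
  have hs2 : Real.sinh (c*x) ^ 2 ≤ Real.cosh (c*x) ^ 2 := by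
    nlinarith [Real.cosh_sq_sub_sinh_sq (c*x)]
  have hub : ε * c * Real.sinh (c*x) ^ 2 ≤ ε * c * Real.cosh (c*x) ^ 2 :=
    mul_le_mul_of_nonneg_left hs2 (by positivity)
  rw [abs_mul, abs_of_nonneg (Real.exp_pos _).le]
  have h1 : |c * Real.cosh (c*x) - ε * c * Real.sinh (c*x) ^ 2|
      ≤ c * Real.cosh (c*x) + ε * c * Real.cosh (c*x) ^ 2 := by
    rw [abs_le]
    constructor <;> nlinarith [sq_nonneg (Real.sinh (c*x)), mul_pos hε hc]
  have hA : Real.cosh (c*x) * Real.exp (-ε * Real.cosh (c*x)) ≤ 1/ε :=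
    mul_exp_le' ε _ hε
  have hsplit : Real.exp (-ε * Real.cosh (c*x))
      = Real.exp (-(ε/2) * Real.cosh (c*x)) * Real.exp (-(ε/2) * Real.cosh (c*x)) := by
    rw [← Real.exp_add]; ring_nf
  have hB : Real.cosh (c*x) ^ 2 * Real.exp (-ε * Real.cosh (c*x)) ≤ 4/ε^2 := by
    rw [hsplit]
    have h := mul_exp_le' (ε/2) (Real.cosh (c*x)) (by positivity)
    have hnn : 0 ≤ Real.cosh (c*x) * Real.exp (-(ε/2) * Real.cosh (c*x)) := by positivity
    calc Real.cosh (c*x) ^ 2 * (Real.exp (-(ε/2) * Real.cosh (c*x)) * Real.exp (-(ε/2) * Real.cosh (c*x)))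
        = (Real.cosh (c*x) * Real.exp (-(ε/2) * Real.cosh (c*x))) ^ 2 := by ring
      _ ≤ (1/(ε/2)) ^ 2 := by apply pow_le_pow_left₀ hnn h
      _ = 4/ε^2 := by field_simp; ring
  calc |c * Real.cosh (c*x) - ε * c * Real.sinh (c*x) ^ 2| * Real.exp (-ε * Real.cosh (c*x))
      ≤ (c * Real.cosh (c*x) + ε * c * Real.cosh (c*x) ^ 2) * Real.exp (-ε * Real.cosh (c*x)) :=
        mul_le_mul_of_nonneg_right h1 (Real.exp_pos _).le
    _ = c * (Real.cosh (c*x) * Real.exp (-ε * Real.cosh (c*x)))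
        + ε * c * (Real.cosh (c*x) ^ 2 * Real.exp (-ε * Real.cosh (c*x))) := by ring
    _ ≤ c * (1/ε) + ε * c * (4/ε^2) := by
        apply add_le_add
        · exact mul_le_mul_of_nonneg_left hA hc.le
        · exact mul_le_mul_of_nonneg_left hB (by positivity)
    _ = 5 * c / ε := by field_simp; ring


/-- sharpness of the Poincaré constant: if `κ ≥ 0` is such that
`∫ h² w² ≤ κ ∫ h'² w²` for every bounded `C¹` function `h` with bounded derivative
and `∫ h w² = 0`, then `κ ≥ 4/(3k²)`. -/
theorem poincare_constant_sharp
    (ν b a : ℝ) (hν : 0 < ν) (hb : 0 < b) (ha : a ∈ Set.Ioo (0 : ℝ) 1)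
    (κ : ℝ) (hκ : 0 ≤ κ)
    (hpoincare : ∀ h : ℝ → ℝ, ContDiff ℝ 1 h →
      (∃ M : ℝ, ∀ x : ℝ, |h x| ≤ M) →
      (∃ M : ℝ, ∀ x : ℝ, |deriv h x| ≤ M) →
      (∫ x : ℝ, h x * (twW ν b x) ^ 2) = 0 →
      (∫ x : ℝ, (h x) ^ 2 * (twW ν b x) ^ 2)
        ≤ κ * ∫ x : ℝ, (deriv h x) ^ 2 * (twW ν b x) ^ 2) :
    4 / (3 * waveK ν b ^ 2) ≤ κ := by
  set k := waveK ν b with hkdef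
  have hk : 0 < k := Real.sqrt_pos.mpr (by positivity)
  set c := k / 2 with hcdef
  have hc : 0 < c := by positivity
  have hw : ∀ x : ℝ, twW ν b x = c / (2 * Real.cosh (c * x) ^ 2) := by
    intro x
    rw [twW_formula ν b x]
  have hweven : ∀ x : ℝ, twW ν b (-x) = twW ν b x := by
    intro x
    rw [hw, hw, mul_neg, Real.cosh_neg]
  have hWcont : Continuous (fun x : ℝ => c / (2 * Real.cosh (c * x) ^ 2)) := by
    apply Continuous.div continuous_const (by fun_prop)
    intro x; positivity
  -- the sequence of ε's
  set εn : ℕ → ℝ := fun n => 1 / ((n : ℝ) + 1) with hεndef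
  have hεpos : ∀ n : ℕ, 0 < εn n := by
    intro n; positivity
  -- key inequality for each n
  have key : ∀ n : ℕ,
      (∫ x : ℝ, (Htest c (εn n) x) ^ 2 * (c / (2 * Real.cosh (c * x) ^ 2)) ^ 2)
        ≤ κ * ∫ x : ℝ, (Dtest c (εn n) x) ^ 2 * (c / (2 * Real.cosh (c * x) ^ 2)) ^ 2 := by
    intro n
    have hzero : (∫ x : ℝ, Htest c (εn n) x * (twW ν b x) ^ 2) = 0 := by
      have hodd : ∀ x : ℝ, Htest c (εn n) (-x) * (twW ν b (-x)) ^ 2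
          = -(Htest c (εn n) x * (twW ν b x) ^ 2) := by
        intro x
        rw [hweven]
        unfold Htest
        rw [mul_neg, Real.sinh_neg, Real.cosh_neg]
        ring
      have h0 := MeasureTheory.integral_neg_eq_self
        (fun x : ℝ => Htest c (εn n) x * (twW ν b x) ^ 2) volume
      simp only [hodd] at h0
      rw [MeasureTheory.integral_neg] at h0
      linarith
    have h := hpoincare (Htest c (εn n)) (contDiff_Htest c (εn n))
      ⟨1 / εn n, fun x => abs_Htest_le c (εn n) (hεpos n) x⟩
      ⟨5 * c / εn n, fun x => by
        rw [deriv_Htest]; exact abs_Dtest_le_const c (εn n) hc (hεpos n) x⟩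
      hzero
    simp only [hw, deriv_Htest] at h
    exact h
  -- convergence of the numerators
  have hA : Tendsto (fun n : ℕ => ∫ x : ℝ, (Htest c (εn n) x) ^ 2
      * (c / (2 * Real.cosh (c * x) ^ 2)) ^ 2) atTop (nhds (c / 6)) := by
    rw [← integral_f1 hc]
    apply MeasureTheory.tendsto_integral_of_dominated_convergence
      (bound := fun x : ℝ => Real.sinh (c*x) ^ 2 * (c / (2 * Real.cosh (c*x) ^ 2)) ^ 2)
    · intro n
      apply Continuous.aestronglyMeasurable
      exact ((contDiff_Htest c (εn n)).continuous.pow 2).mul (hWcont.pow 2)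
    · exact integrable_f1 hc
    · intro n
      apply Filter.Eventually.of_forall
      intro x
      rw [Real.norm_eq_abs, abs_of_nonneg (by positivity)]
      apply mul_le_mul_of_nonneg_right _ (by positivity)
      unfold Htest
      rw [mul_pow]
      have hle1 : Real.exp (-εn n * Real.cosh (c*x)) ^ 2 ≤ 1 := by
        have h1 : Real.exp (-εn n * Real.cosh (c*x)) ≤ 1 := by
          apply Real.exp_le_one_iff.mpr
          have := Real.cosh_pos (c*x)
          nlinarith [hεpos n]
        nlinarith [Real.exp_pos (-εn n * Real.cosh (c*x))]
      nlinarith [sq_nonneg (Real.sinh (c*x)), Real.exp_pos (-εn n * Real.cosh (c*x))]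
    · apply Filter.Eventually.of_forall
      intro x
      have hcontε : Continuous (fun ε : ℝ =>
          (Real.sinh (c*x) * Real.exp (-ε * Real.cosh (c*x))) ^ 2
            * (c / (2 * Real.cosh (c*x) ^ 2)) ^ 2) := by fun_prop
      have h := (hcontε.tendsto 0).comp tendsto_one_div_add_atTop_nhds_zero_nat
      simp only [Function.comp, neg_zero, zero_mul, Real.exp_zero, mul_one] at h
      exact h
  -- convergence of the denominators
  have hB : Tendsto (fun n : ℕ => ∫ x : ℝ, (Dtest c (εn n) x) ^ 2
      * (c / (2 * Real.cosh (c * x) ^ 2)) ^ 2) atTop (nhds (c ^ 3 / 2)) := by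
    rw [← integral_f2 hc]
    apply MeasureTheory.tendsto_integral_of_dominated_convergence
      (bound := fun x : ℝ => 4 * ((c * Real.cosh (c*x)) ^ 2 * (c / (2 * Real.cosh (c*x) ^ 2)) ^ 2))
    · intro n
      apply Continuous.aestronglyMeasurable
      apply Continuous.mul _ (hWcont.pow 2)
      apply Continuous.pow
      unfold Dtest
      fun_prop
    · exact (integrable_f2 hc).const_mul 4
    · intro n
      apply Filter.Eventually.of_forall
      intro x
      rw [Real.norm_eq_abs, abs_of_nonneg (by positivity)]
      have hd := abs_Dtest_le_bound c (εn n) hc (hεpos n) x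
      have hd2 : (Dtest c (εn n) x) ^ 2 ≤ (2 * c * Real.cosh (c*x)) ^ 2 := by
        rw [← sq_abs]
        apply pow_le_pow_left₀ (abs_nonneg _) hd
      calc (Dtest c (εn n) x) ^ 2 * (c / (2 * Real.cosh (c*x) ^ 2)) ^ 2
          ≤ (2 * c * Real.cosh (c*x)) ^ 2 * (c / (2 * Real.cosh (c*x) ^ 2)) ^ 2 :=
            mul_le_mul_of_nonneg_right hd2 (by positivity)
        _ = 4 * ((c * Real.cosh (c*x)) ^ 2 * (c / (2 * Real.cosh (c*x) ^ 2)) ^ 2) := by ring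
    · apply Filter.Eventually.of_forall
      intro x
      have hcontε : Continuous (fun ε : ℝ =>
          ((c * Real.cosh (c*x) - ε * c * Real.sinh (c*x) ^ 2)
            * Real.exp (-ε * Real.cosh (c*x))) ^ 2
            * (c / (2 * Real.cosh (c*x) ^ 2)) ^ 2) := by fun_prop
      have h := (hcontε.tendsto 0).comp tendsto_one_div_add_atTop_nhds_zero_nat
      simp only [Function.comp, neg_zero, zero_mul, Real.exp_zero, mul_one, sub_zero] at h
      exact h
  -- pass to the limit
  have hBκ : Tendsto (fun n : ℕ => κ * ∫ x : ℝ, (Dtest c (εn n) x) ^ 2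
      * (c / (2 * Real.cosh (c * x) ^ 2)) ^ 2) atTop (nhds (κ * (c ^ 3 / 2))) :=
    hB.const_mul κ
  have main : c / 6 ≤ κ * (c ^ 3 / 2) := le_of_tendsto_of_tendsto' hA hBκ key
  -- conclude
  have main2 : k / 12 ≤ κ * k ^ 3 / 16 := by
    rw [hcdef] at main
    nlinarith [main]
  rw [div_le_iff₀ (by positivity : (0:ℝ) < 3 * k ^ 2)]
  have h3 : 4 * k ≤ κ * (3 * k ^ 2) * k := by nlinarith [main2]
  have := (mul_le_mul_iff_of_pos_right hk).mp h3
  linarith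
end

section
/- Define h₀(x) = v''(x)·v'(x)^{-3/2}. Then ∫_ℝ h₀(x) w(x)² dx = 0, ∫_ℝ h₀(x)² w(x)² dx = k²/3, and ∫_ℝ (h₀'(x))² w(x)² dx = k⁴/4; in particular ∫_ℝ h₀² w² dx = (4/(3k²)) ∫_ℝ (h₀')² w² dx, so h₀ realizes equality in the Poincaré inequality with constant 4/(3k²). -/
open Real MeasureTheory Filter Topology

/-- The extremal function `h₀ = v''·(v')^{-3/2}` of the Poincaré inequality. -/
noncomputable def extremalH (ν b : ℝ) (x : ℝ) : ℝ :=
  deriv (deriv (twProfile ν b)) x * (deriv (twProfile ν b) x) ^ (-(3 / 2) : ℝ)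

/-! ### Auxiliary lemmas -/

lemma aux_hasDerivAt_exp_mul (c x : ℝ) :
    HasDerivAt (fun y : ℝ => exp (c * y)) (c * exp (c * x)) x := by
  simpa [Function.comp_def, mul_comm] using
    (Real.hasDerivAt_exp (c * x)).comp x ((hasDerivAt_id x).const_mul c)

lemma aux_hv {k : ℝ} (x : ℝ) :
    HasDerivAt (fun y => (1 + exp (-k * y))⁻¹)
      (k * exp (-k * x) / (1 + exp (-k * x)) ^ 2) x := by
  have hE : (0:ℝ) < exp (-k * x) := exp_pos _
  have h1 : HasDerivAt (fun y => 1 + exp (-k * y)) (-k * exp (-k * x)) x :=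
    (aux_hasDerivAt_exp_mul (-k) x).const_add 1
  have h2 := h1.fun_inv (by positivity)
  refine h2.congr_deriv (Eq.symm ?_)
  field_simp

lemma aux_hv' {k : ℝ} (x : ℝ) :
    HasDerivAt (fun y => k * exp (-k * y) / (1 + exp (-k * y)) ^ 2)
      (k ^ 2 * exp (-k * x) * (exp (-k * x) - 1) / (1 + exp (-k * x)) ^ 3) x := by
  have hE : (0:ℝ) < exp (-k * x) := exp_pos _
  have hexp : HasDerivAt (fun y => exp (-k * y)) (-k * exp (-k * x)) x :=
    aux_hasDerivAt_exp_mul (-k) x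
  have h1 : HasDerivAt (fun y => 1 + exp (-k * y)) (-k * exp (-k * x)) x :=
    hexp.const_add 1
  have hnum : HasDerivAt (fun y => k * exp (-k * y)) (k * (-k * exp (-k * x))) x :=
    hexp.const_mul k
  have hden : HasDerivAt (fun y => (1 + exp (-k * y)) ^ 2)
      (2 * (1 + exp (-k * x)) ^ 1 * (-k * exp (-k * x))) x := by
    simpa using h1.fun_pow 2
  have h2 := hnum.div hden (by positivity)
  refine h2.congr_deriv (Eq.symm ?_)
  have h3 : (1:ℝ) + exp (-k * x) ≠ 0 := by positivity
  field_simp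
  ring

lemma aux_deriv_twProfile (ν b : ℝ) :
    deriv (twProfile ν b)
      = fun x => waveK ν b * exp (-(waveK ν b) * x) / (1 + exp (-(waveK ν b) * x)) ^ 2 :=
  funext fun x => (aux_hv x).deriv

lemma aux_extremalH_eq {ν b : ℝ} (hk : 0 < waveK ν b) (x : ℝ) :
    extremalH ν b x
      = Real.sqrt (waveK ν b)
          * (exp (-(waveK ν b / 2) * x) - exp (waveK ν b / 2 * x)) := by
  set k := waveK ν b with hkdef
  rw [extremalH, aux_deriv_twProfile]
  rw [show deriv (fun x => k * exp (-k * x) / (1 + exp (-k * x)) ^ 2) x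
      = k ^ 2 * exp (-k * x) * (exp (-k * x) - 1) / (1 + exp (-k * x)) ^ 3 from
    (aux_hv' x).deriv]
  have hE : (0:ℝ) < exp (-k * x) := exp_pos _
  set P := exp (-(k / 2) * x) with hPdef
  set Q := exp (k / 2 * x) with hQdef
  have hP : 0 < P := exp_pos _
  have hQ : 0 < Q := exp_pos _
  have hPP : P * P = exp (-k * x) := by
    rw [hPdef, ← exp_add]; congr 1; ring
  have hPQ : P * Q = 1 := by
    rw [hPdef, hQdef, ← exp_add, show -(k/2) * x + k/2 * x = 0 by ring, exp_zero]
  have h1E : (0:ℝ) < 1 + exp (-k * x) := by positivity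
  have hBpos : (0:ℝ) < Real.sqrt (k * exp (-k * x)) / (1 + exp (-k * x)) :=
    div_pos (Real.sqrt_pos.2 (by positivity)) h1E
  have hA : k * exp (-k * x) / (1 + exp (-k * x)) ^ 2
      = (Real.sqrt (k * exp (-k * x)) / (1 + exp (-k * x))) ^ 2 := by
    rw [div_pow, Real.sq_sqrt (by positivity)]
  have key : (k * exp (-k * x) / (1 + exp (-k * x)) ^ 2) ^ (-(3 / 2) : ℝ)
      = ((Real.sqrt (k * exp (-k * x)) / (1 + exp (-k * x))) ^ 3)⁻¹ := by
    rw [hA, ← Real.rpow_natCast (Real.sqrt (k * exp (-k * x)) / (1 + exp (-k * x))) 2,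
      ← Real.rpow_mul hBpos.le]
    norm_num
  rw [key]
  have hsq : Real.sqrt (k * exp (-k * x)) = Real.sqrt k * P := by
    rw [← hPP, Real.sqrt_mul hk.le, Real.sqrt_mul_self hP.le]
  rw [hsq]
  have hsk : Real.sqrt k * Real.sqrt k = k := Real.mul_self_sqrt hk.le
  have hskpos : 0 < Real.sqrt k := Real.sqrt_pos.2 hk
  rw [← hPP]
  field_simp
  ring_nf
  linear_combination (k^2) * hPQ
    + ((P*Q - P^2)*(2*k + (Real.sqrt k*Real.sqrt k - k))) * hsk

lemma aux_twW_eq {ν b : ℝ} (hk : 0 < waveK ν b) (x : ℝ) :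
    twW ν b x = waveK ν b / (exp (-(waveK ν b / 2) * x) + exp (waveK ν b / 2 * x)) ^ 2 := by
  set k := waveK ν b with hkdef
  set P := exp (-(k / 2) * x) with hPdef
  set Q := exp (k / 2 * x) with hQdef
  have hP : 0 < P := exp_pos _
  have hQ : 0 < Q := exp_pos _
  have hPP : P * P = exp (-k * x) := by
    rw [hPdef, ← exp_add]; congr 1; ring
  have hPQ : P * Q = 1 := by
    rw [hPdef, hQdef, ← exp_add, show -(k/2) * x + k/2 * x = 0 by ring, exp_zero]
  have h1E : (0:ℝ) < 1 + exp (-k * x) := by positivity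
  rw [twW, twProfile]
  rw [show -waveK ν b * x = -k * x from rfl, ← hPP]
  have h1P : (0:ℝ) < 1 + P * P := by positivity
  field_simp
  linear_combination (k * (2*P^2 + P*Q + 1)) * hPQ

lemma aux_hasDerivAt_extremalH {ν b : ℝ} (hk : 0 < waveK ν b) (x : ℝ) :
    HasDerivAt (extremalH ν b)
      (-(Real.sqrt (waveK ν b) * waveK ν b / 2)
        * (exp (-(waveK ν b / 2) * x) + exp (waveK ν b / 2 * x))) x := by
  set k := waveK ν b with hkdef
  have heq : extremalH ν b
      = fun y => Real.sqrt k * (exp (-(k / 2) * y) - exp (k / 2 * y)) :=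
    funext fun y => aux_extremalH_eq hk y
  rw [heq]
  have h := ((aux_hasDerivAt_exp_mul (-(k/2)) x).fun_sub (aux_hasDerivAt_exp_mul (k/2) x)).const_mul
    (Real.sqrt k)
  refine h.congr_deriv (Eq.symm ?_)
  ring

lemma aux_deriv_extremalH {ν b : ℝ} (hk : 0 < waveK ν b) (x : ℝ) :
    deriv (extremalH ν b) x
      = -(Real.sqrt (waveK ν b) * waveK ν b / 2)
          * (exp (-(waveK ν b / 2) * x) + exp (waveK ν b / 2 * x)) :=
  (aux_hasDerivAt_extremalH hk x).deriv

lemma aux_integrable_exp_neg_abs {c : ℝ} (hc : 0 < c) :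
    Integrable fun x : ℝ => exp (-(c * |x|)) := by
  rw [← integrableOn_univ, ← Set.Iic_union_Ioi (a := (0:ℝ)), integrableOn_union]
  constructor
  · rw [← Measure.map_neg_eq_self (volume : Measure ℝ)]
    have m : MeasurableEmbedding fun x : ℝ => -x := (Homeomorph.neg ℝ).measurableEmbedding
    rw [m.integrableOn_map_iff]
    simp_rw [Function.comp_def, abs_neg, Set.neg_preimage, Set.neg_Iic, neg_zero]
    refine (integrableOn_Ici_iff_integrableOn_Ioi).mpr ?_
    exact (exp_neg_integrableOn_Ioi 0 hc).congr_fun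
      (fun x hx => by simp only [abs_of_pos (Set.mem_Ioi.mp hx), neg_mul]) measurableSet_Ioi
  · exact (exp_neg_integrableOn_Ioi 0 hc).congr_fun
      (fun x hx => by simp only [abs_of_pos (Set.mem_Ioi.mp hx), neg_mul]) measurableSet_Ioi

lemma aux_integrable_of_bound {f : ℝ → ℝ} (hf : Continuous f) {A c : ℝ} (hc : 0 < c)
    (h : ∀ x, |f x| ≤ A * exp (-(c * |x|))) : Integrable f :=
  ((aux_integrable_exp_neg_abs hc).const_mul A).mono' hf.aestronglyMeasurable
    (Filter.Eventually.of_forall (by simpa [norm_eq_abs] using h))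

lemma aux_exp_abs_le {k : ℝ} (x : ℝ) :
    exp (k / 2 * |x|) ≤ exp (-(k / 2) * x) + exp (k / 2 * x) := by
  rcases le_or_gt 0 x with h | h
  · rw [abs_of_nonneg h]; exact le_add_of_nonneg_left (exp_pos _).le
  · rw [abs_of_neg h, show k / 2 * -x = -(k/2) * x by ring]
    exact le_add_of_nonneg_right (exp_pos _).le

/-- `h₀ = v''·(v')^{-3/2}` satisfies `∫ h₀ w² = 0`,
`∫ h₀² w² = k²/3`, `∫ (h₀')² w² = k⁴/4`, and thus realizes equality in the
Poincaré inequality with constant `4/(3k²)`. -/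
theorem extremal_function_poincare
    (ν b a : ℝ) (hν : 0 < ν) (hb : 0 < b) (ha : a ∈ Set.Ioo (0 : ℝ) 1) :
    (∫ x : ℝ, extremalH ν b x * (twW ν b x) ^ 2) = 0 ∧
    (∫ x : ℝ, (extremalH ν b x) ^ 2 * (twW ν b x) ^ 2) = waveK ν b ^ 2 / 3 ∧
    (∫ x : ℝ, (deriv (extremalH ν b) x) ^ 2 * (twW ν b x) ^ 2) = waveK ν b ^ 4 / 4 ∧
    (∫ x : ℝ, (extremalH ν b x) ^ 2 * (twW ν b x) ^ 2)
      = (4 / (3 * waveK ν b ^ 2))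
        * ∫ x : ℝ, (deriv (extremalH ν b) x) ^ 2 * (twW ν b x) ^ 2 := by
  have hk : 0 < waveK ν b := Real.sqrt_pos.2 (by positivity)
  set k := waveK ν b with hkdef
  have hsk : Real.sqrt k * Real.sqrt k = k := Real.mul_self_sqrt hk.le
  have hskpos : 0 < Real.sqrt k := Real.sqrt_pos.2 hk
  set P : ℝ → ℝ := fun x => exp (-(k / 2) * x) with hPdef
  set Q : ℝ → ℝ := fun x => exp (k / 2 * x) with hQdef
  have hP : ∀ x, 0 < P x := fun x => exp_pos _
  have hQ : ∀ x, 0 < Q x := fun x => exp_pos _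
  have hC : ∀ x, 0 < P x + Q x := fun x => by positivity
  have hPQ : ∀ x, P x * Q x = 1 := fun x => by
    rw [hPdef, hQdef]; dsimp only
    rw [← exp_add, show -(k/2) * x + k/2 * x = 0 by ring, exp_zero]
  have hQinv : ∀ x, Q x = (P x)⁻¹ := fun x =>
    eq_inv_of_mul_eq_one_left (by rw [mul_comm]; exact hPQ x)
  have hPfold : ∀ x, exp (-(k / 2) * x) = P x := fun _ => rfl
  have hQfold : ∀ x, exp (k / 2 * x) = Q x := fun _ => rfl
  -- the three explicit integrands
  have habs : ∀ x, |P x - Q x| ≤ P x + Q x := fun x => by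
    rw [abs_sub_le_iff]; constructor <;> nlinarith [hP x, hQ x]
  have hm : ∀ x, exp (k / 2 * |x|) ≤ P x + Q x := fun x => aux_exp_abs_le x
  have hEbot : Tendsto (fun x : ℝ => exp (-k * x)) atBot atTop := by
    have h1 : Tendsto (fun x : ℝ => -k * x) atBot atTop :=
      (tendsto_const_mul_atTop_of_neg (l := atBot) (f := fun x : ℝ => x)
        (show -k < 0 by linarith)).2 tendsto_id
    simpa [Function.comp_def] using Real.tendsto_exp_atTop.comp h1
  have hEtop : Tendsto (fun x : ℝ => exp (-k * x)) atTop (𝓝 0) := by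
    have h1 : Tendsto (fun x : ℝ => -k * x) atTop atBot :=
      (tendsto_const_mul_atBot_of_neg (l := atTop) (f := fun x : ℝ => x)
        (show -k < 0 by linarith)).2 tendsto_id
    simpa [Function.comp_def] using Real.tendsto_exp_atBot.comp h1
  have hQtop : Tendsto Q atTop atTop := by
    have h1 : Tendsto (fun x : ℝ => k / 2 * x) atTop atTop :=
      (tendsto_const_mul_atTop_of_pos (l := atTop) (f := fun x : ℝ => x)
        (show (0:ℝ) < k / 2 by linarith)).2 tendsto_id
    exact (Real.tendsto_exp_atTop.comp h1).congr fun x => rfl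
  have hPbot : Tendsto P atBot atTop := by
    have h1 : Tendsto (fun x : ℝ => -(k / 2) * x) atBot atTop :=
      (tendsto_const_mul_atTop_of_neg (l := atBot) (f := fun x : ℝ => x)
        (show -(k / 2) < 0 by linarith)).2 tendsto_id
    exact (Real.tendsto_exp_atTop.comp h1).congr fun x => rfl
  have hCtop : Tendsto (fun x => P x + Q x) atTop atTop :=
    tendsto_atTop_mono (fun x => le_add_of_nonneg_left (hP x).le) hQtop
  have hCbot : Tendsto (fun x => P x + Q x) atBot atTop :=
    tendsto_atTop_mono (fun x => le_add_of_nonneg_right (hQ x).le) hPbot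
  -- First integral
  have I1 : (∫ x : ℝ, extremalH ν b x * (twW ν b x) ^ 2) = 0 := by
    have hfun : (fun x : ℝ => extremalH ν b x * (twW ν b x) ^ 2)
        = fun x => Real.sqrt k * k ^ 2 * (P x - Q x) / (P x + Q x) ^ 4 := by
      funext x
      rw [aux_extremalH_eq hk x, aux_twW_eq hk x, ← hkdef, hPfold, hQfold]
      have := hC x
      field_simp
    rw [hfun]
    have hderiv : ∀ x, HasDerivAt (fun y => 2/3 * (Real.sqrt k * k) * (((P y + Q y) ^ 3)⁻¹))
        (Real.sqrt k * k ^ 2 * (P x - Q x) / (P x + Q x) ^ 4) x := by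
      intro x
      have hCd : HasDerivAt (fun y => P y + Q y)
          (-(k/2) * P x + k/2 * Q x) x :=
        (aux_hasDerivAt_exp_mul (-(k/2)) x).add (aux_hasDerivAt_exp_mul (k/2) x)
      have h3 := (hCd.fun_pow 3).fun_inv (by positivity)
      have h4 := h3.const_mul (2/3 * (Real.sqrt k * k))
      refine h4.congr_deriv (Eq.symm ?_)
      have := hC x
      field_simp
      ring
    have hint : Integrable (fun x => Real.sqrt k * k ^ 2 * (P x - Q x) / (P x + Q x) ^ 4) := by
      apply aux_integrable_of_bound ?_ (show (0:ℝ) < 3 * (k/2) by linarith)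
        (A := Real.sqrt k * k ^ 2)
      · intro x
        have h1 : |Real.sqrt k * k ^ 2 * (P x - Q x) / (P x + Q x) ^ 4|
            = Real.sqrt k * k ^ 2 * |P x - Q x| / (P x + Q x) ^ 4 := by
          rw [abs_div, abs_mul, abs_of_nonneg (by positivity : (0:ℝ) ≤ Real.sqrt k * k ^ 2),
            abs_of_nonneg (by positivity : (0:ℝ) ≤ (P x + Q x) ^ 4)]
        rw [h1]
        have h2 : Real.sqrt k * k ^ 2 * |P x - Q x| / (P x + Q x) ^ 4
            ≤ Real.sqrt k * k ^ 2 * (P x + Q x) / (P x + Q x) ^ 4 := by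
          gcongr
          exact habs x
        refine h2.trans ?_
        have h3 : Real.sqrt k * k ^ 2 * (P x + Q x) / (P x + Q x) ^ 4
            = Real.sqrt k * k ^ 2 / (P x + Q x) ^ 3 := by
          have := (hC x).ne'
          field_simp
        rw [h3]
        have h4 : exp (3 * (k/2) * |x|) ≤ (P x + Q x) ^ 3 := by
          calc exp (3 * (k/2) * |x|) = exp (k/2 * |x|) ^ 3 := by
                rw [← Real.exp_nat_mul]; norm_num; ring_nf
            _ ≤ (P x + Q x) ^ 3 := pow_le_pow_left₀ (exp_pos _).le (hm x) 3
        have h5 : Real.sqrt k * k ^ 2 / (P x + Q x) ^ 3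
            ≤ Real.sqrt k * k ^ 2 / exp (3 * (k/2) * |x|) := by
          gcongr <;> first | positivity | exact exp_pos _
        refine h5.trans ?_
        rw [Real.exp_neg, div_eq_mul_inv]
      · apply Continuous.div
        · fun_prop
        · fun_prop
        · intro x; positivity
    have h0 := integral_of_hasDerivAt_of_tendsto hderiv hint
      (((tendsto_pow_atTop (n := 3) (by norm_num)).comp hCbot).inv_tendsto_atTop.const_mul _)
      (((tendsto_pow_atTop (n := 3) (by norm_num)).comp hCtop).inv_tendsto_atTop.const_mul _)
    simpa using h0
  -- Second integral
  have I2 : (∫ x : ℝ, (extremalH ν b x) ^ 2 * (twW ν b x) ^ 2) = k ^ 2 / 3 := by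
    have hfun : (fun x : ℝ => (extremalH ν b x) ^ 2 * (twW ν b x) ^ 2)
        = fun x => k ^ 3 * (P x - Q x) ^ 2 / (P x + Q x) ^ 4 := by
      funext x
      rw [aux_extremalH_eq hk x, aux_twW_eq hk x, ← hkdef, hPfold, hQfold]
      have := hC x
      rw [mul_pow, Real.sq_sqrt hk.le]
      field_simp
    rw [hfun]
    have hderiv : ∀ x, HasDerivAt
        (fun y => k^2/6 * (-1 + 2 * (1 + exp (-k * y))⁻¹) ^ 3)
        (k ^ 3 * (P x - Q x) ^ 2 / (P x + Q x) ^ 4) x := by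
      intro x
      have hT : HasDerivAt (fun y => -1 + 2 * (1 + exp (-k * y))⁻¹)
          (2 * (k * exp (-k * x) / (1 + exp (-k * x)) ^ 2)) x :=
        ((aux_hv x).const_mul 2).const_add (-1)
      have h3 := (hT.fun_pow 3).const_mul (k^2/6)
      refine h3.congr_deriv (Eq.symm ?_)
      have hPP : P x * P x = exp (-k * x) := by
        rw [hPdef]; dsimp only; rw [← exp_add]; congr 1; ring
      have h1E : (0:ℝ) < 1 + exp (-k * x) := by positivity
      rw [← hPP, hQinv x]
      have := hP x
      have h1P : (0:ℝ) < 1 + P x * P x := by positivity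
      rw [show (3:ℕ) - 1 = 2 from rfl]
      field_simp
      ring
    have hint : Integrable (fun x => k ^ 3 * (P x - Q x) ^ 2 / (P x + Q x) ^ 4) := by
      apply aux_integrable_of_bound ?_ (show (0:ℝ) < 2 * (k/2) by linarith) (A := k ^ 3)
      · intro x
        have h1 : |k ^ 3 * (P x - Q x) ^ 2 / (P x + Q x) ^ 4|
            = k ^ 3 * (P x - Q x) ^ 2 / (P x + Q x) ^ 4 := by
          rw [abs_of_nonneg (by positivity)]
        rw [h1]
        have h2 : k ^ 3 * (P x - Q x) ^ 2 / (P x + Q x) ^ 4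
            ≤ k ^ 3 * (P x + Q x) ^ 2 / (P x + Q x) ^ 4 := by
          have hsq : (P x - Q x) ^ 2 ≤ (P x + Q x) ^ 2 :=
            sq_le_sq' (by nlinarith [hP x, hQ x]) (by nlinarith [hP x, hQ x])
          gcongr
        refine h2.trans ?_
        have h3 : k ^ 3 * (P x + Q x) ^ 2 / (P x + Q x) ^ 4 = k ^ 3 / (P x + Q x) ^ 2 := by
          have := (hC x).ne'
          field_simp
        rw [h3]
        have h4 : exp (2 * (k/2) * |x|) ≤ (P x + Q x) ^ 2 := by
          calc exp (2 * (k/2) * |x|) = exp (k/2 * |x|) ^ 2 := by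
                rw [← Real.exp_nat_mul]; norm_num; ring_nf
            _ ≤ (P x + Q x) ^ 2 := pow_le_pow_left₀ (exp_pos _).le (hm x) 2
        have h5 : k ^ 3 / (P x + Q x) ^ 2 ≤ k ^ 3 / exp (2 * (k/2) * |x|) := by
          gcongr <;> first | positivity | exact exp_pos _
        refine h5.trans ?_
        rw [Real.exp_neg, div_eq_mul_inv]
      · apply Continuous.div
        · fun_prop
        · fun_prop
        · intro x; positivity
    have hbot : Tendsto (fun y => k^2/6 * (-1 + 2 * (1 + exp (-k * y))⁻¹) ^ 3) atBot
        (𝓝 (k^2/6 * (-1 + 2 * 0) ^ 3)) := by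
      have h1 : Tendsto (fun y : ℝ => (1 + exp (-k * y))⁻¹) atBot (𝓝 0) :=
        (tendsto_atTop_add_const_left _ 1 hEbot).inv_tendsto_atTop
      exact (((h1.const_mul 2).const_add (-1)).pow 3).const_mul _
    have htop : Tendsto (fun y => k^2/6 * (-1 + 2 * (1 + exp (-k * y))⁻¹) ^ 3) atTop
        (𝓝 (k^2/6 * (-1 + 2 * (1 + 0)⁻¹) ^ 3)) := by
      have h1 : Tendsto (fun y : ℝ => (1 + exp (-k * y))⁻¹) atTop (𝓝 ((1 + 0)⁻¹)) :=
        (hEtop.const_add 1).inv₀ (by norm_num)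
      exact (((h1.const_mul 2).const_add (-1)).pow 3).const_mul _
    have h0 := integral_of_hasDerivAt_of_tendsto hderiv hint hbot htop
    rw [h0]
    norm_num
    ring
  -- Third integral
  have I3 : (∫ x : ℝ, (deriv (extremalH ν b)) x ^ 2 * (twW ν b x) ^ 2) = k ^ 4 / 4 := by
    have hfun : (fun x : ℝ => (deriv (extremalH ν b) x) ^ 2 * (twW ν b x) ^ 2)
        = fun x => k ^ 5 / 4 / (P x + Q x) ^ 2 := by
      funext x
      rw [aux_deriv_extremalH hk x, aux_twW_eq hk x, ← hkdef, hPfold, hQfold]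
      have := hC x
      have h1 : (-(Real.sqrt k * k / 2) * (P x + Q x)) ^ 2
          = k ^ 3 / 4 * (P x + Q x) ^ 2 := by
        rw [mul_pow, neg_pow]
        rw [show (Real.sqrt k * k / 2) ^ 2 = Real.sqrt k * Real.sqrt k * k^2 / 4 by ring, hsk]
        ring
      rw [h1]
      field_simp
    rw [hfun]
    have hderiv : ∀ x, HasDerivAt
        (fun y => k^4/8 * (-1 + 2 * (1 + exp (-k * y))⁻¹))
        (k ^ 5 / 4 / (P x + Q x) ^ 2) x := by
      intro x
      have hT : HasDerivAt (fun y => -1 + 2 * (1 + exp (-k * y))⁻¹)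
          (2 * (k * exp (-k * x) / (1 + exp (-k * x)) ^ 2)) x :=
        ((aux_hv x).const_mul 2).const_add (-1)
      have h3 := hT.const_mul (k^4/8)
      refine h3.congr_deriv (Eq.symm ?_)
      have hPP : P x * P x = exp (-k * x) := by
        rw [hPdef]; dsimp only; rw [← exp_add]; congr 1; ring
      have h1E : (0:ℝ) < 1 + exp (-k * x) := by positivity
      rw [← hPP, hQinv x]
      have := hP x
      have h1P : (0:ℝ) < 1 + P x * P x := by positivity
      field_simp
      ring
    have hint : Integrable (fun x => k ^ 5 / 4 / (P x + Q x) ^ 2) := by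
      apply aux_integrable_of_bound ?_ (show (0:ℝ) < 2 * (k/2) by linarith) (A := k ^ 5 / 4)
      · intro x
        have h1 : |k ^ 5 / 4 / (P x + Q x) ^ 2| = k ^ 5 / 4 / (P x + Q x) ^ 2 := by
          rw [abs_of_nonneg (by positivity)]
        rw [h1]
        have h4 : exp (2 * (k/2) * |x|) ≤ (P x + Q x) ^ 2 := by
          calc exp (2 * (k/2) * |x|) = exp (k/2 * |x|) ^ 2 := by
                rw [← Real.exp_nat_mul]; norm_num; ring_nf
            _ ≤ (P x + Q x) ^ 2 := pow_le_pow_left₀ (exp_pos _).le (hm x) 2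
        have h5 : k ^ 5 / 4 / (P x + Q x) ^ 2 ≤ k ^ 5 / 4 / exp (2 * (k/2) * |x|) := by
          gcongr <;> first | positivity | exact exp_pos _
        refine h5.trans ?_
        rw [Real.exp_neg, div_eq_mul_inv]
      · apply Continuous.div
        · fun_prop
        · fun_prop
        · intro x; positivity
    have hbot : Tendsto (fun y => k^4/8 * (-1 + 2 * (1 + exp (-k * y))⁻¹)) atBot
        (𝓝 (k^4/8 * (-1 + 2 * 0))) := by
      have h1 : Tendsto (fun y : ℝ => (1 + exp (-k * y))⁻¹) atBot (𝓝 0) :=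
        (tendsto_atTop_add_const_left _ 1 hEbot).inv_tendsto_atTop
      exact ((h1.const_mul 2).const_add (-1)).const_mul _
    have htop : Tendsto (fun y => k^4/8 * (-1 + 2 * (1 + exp (-k * y))⁻¹)) atTop
        (𝓝 (k^4/8 * (-1 + 2 * (1 + 0)⁻¹))) := by
      have h1 : Tendsto (fun y : ℝ => (1 + exp (-k * y))⁻¹) atTop (𝓝 ((1 + 0)⁻¹)) :=
        (hEtop.const_add 1).inv₀ (by norm_num)
      exact ((h1.const_mul 2).const_add (-1)).const_mul _
    have h0 := integral_of_hasDerivAt_of_tendsto hderiv hint hbot htop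
    rw [h0]
    norm_num
    ring
  refine ⟨I1, I2, I3, ?_⟩
  rw [I2, I3]
  field_simp
end

section
/- (Half-line Poincaré inequality) Let h : [0,∞) → ℝ be continuously differentiable with h and h' bounded. Then ∫_0^∞ (h(x) - h(0))² w(x)² dx ≤ (4/(3k²)) ∫_0^∞ h'(x)² w(x)² dx. -/
open Real MeasureTheory

open Set Filter Topology



noncomputable def pE (k x : ℝ) : ℝ := Real.exp (-k * x)
noncomputable def pW2 (k x : ℝ) : ℝ := k^2 * pE k x^2 / (1 + pE k x)^4
noncomputable def pPsi (k x : ℝ) : ℝ := k^3 * pE k x^2 / (2*(1 - pE k x)*(1 + pE k x)^3)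
noncomputable def pDPsi (k x : ℝ) : ℝ :=
  -(k^4 * pE k x^2 * (pE k x^2 - pE k x + 1)) / ((1 - pE k x)^2*(1 + pE k x)^4)

lemma pE_pos (k x : ℝ) : 0 < pE k x := Real.exp_pos _
lemma pE_le_one {k x : ℝ} (hk : 0 < k) (hx : 0 ≤ x) : pE k x ≤ 1 := by
  rw [pE, Real.exp_le_one_iff]
  nlinarith
lemma pE_lt_one {k x : ℝ} (hk : 0 < k) (hx : 0 < x) : pE k x < 1 := by
  rw [pE, Real.exp_lt_one_iff]
  nlinarith
lemma one_add_pE_pos (k x : ℝ) : 0 < 1 + pE k x := by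
  have := pE_pos k x; linarith
lemma one_sub_pE_pos {k x : ℝ} (hk : 0 < k) (hx : 0 < x) : 0 < 1 - pE k x := by
  linarith [pE_lt_one hk hx]

lemma hasDerivAt_pE (k x : ℝ) : HasDerivAt (pE k) (-k * pE k x) x := by
  have h1 : HasDerivAt (fun y : ℝ => -k * y) (-k) x := by
    simpa using (hasDerivAt_id x).const_mul (-k)
  unfold pE
  simpa [neg_mul, mul_comm] using h1.exp

lemma one_sub_pE_ge {k x : ℝ} (hk : 0 < k) (hx : 0 ≤ x) : k * x * pE k x ≤ 1 - pE k x := by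
  have h := Real.add_one_le_exp (k * x)
  have hE : pE k x = (Real.exp (k*x))⁻¹ := by
    rw [pE, ← Real.exp_neg]; ring_nf
  have hp : 0 < Real.exp (k * x) := Real.exp_pos _
  rw [hE, ← sub_nonneg]
  have key : 1 - (rexp (k*x))⁻¹ - k * x * (rexp (k*x))⁻¹
      = (rexp (k*x) - 1 - k*x) * (rexp (k*x))⁻¹ := by
    field_simp
  rw [key]
  have : 0 ≤ rexp (k*x) - 1 - k*x := by linarith
  positivity

lemma hasDerivAt_pPsi {k x : ℝ} (hk : 0 < k) (hx : 0 < x) :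
    HasDerivAt (pPsi k) (pDPsi k x) x := by
  have he := hasDerivAt_pE k x
  have h1 : 1 - pE k x ≠ 0 := ne_of_gt (one_sub_pE_pos hk hx)
  have h2 : 1 + pE k x ≠ 0 := ne_of_gt (one_add_pE_pos k x)
  have hnum := (he.pow 2).const_mul (k^3)
  have hsub := (hasDerivAt_const x (1:ℝ)).sub he
  have hadd := (hasDerivAt_const x (1:ℝ)).add he
  have hden := (hsub.const_mul 2).mul (hadd.pow 3)
  have hden0 : 2*(1 - pE k x)*(1 + pE k x)^3 ≠ 0 :=
    ne_of_gt (mul_pos (mul_pos two_pos (one_sub_pE_pos hk hx))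
      (pow_pos (one_add_pE_pos k x) 3))
  have hfin := hnum.div hden hden0
  refine HasDerivAt.congr_deriv (by exact hfin) ?_
  rw [pDPsi]
  simp only [Pi.pow_apply, Pi.sub_apply, Pi.add_apply, Pi.mul_apply]
  field_simp
  ring

lemma hrel {k x : ℝ} (hk : 0 < k) (hx : 0 < x) :
    pDPsi k x * pW2 k x = -(pPsi k x)^2 - (3/4)*k^2*(pW2 k x)^2 := by
  have h1 : 1 - pE k x ≠ 0 := ne_of_gt (one_sub_pE_pos hk hx)
  have h2 : 1 + pE k x ≠ 0 := ne_of_gt (one_add_pE_pos k x)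
  rw [pDPsi, pW2, pPsi]
  field_simp
  ring

lemma pointwise_ineq {k x : ℝ} (hk : 0 < k) (hx : 0 < x) (A B : ℝ) :
    3/4*k^2*A^2*pW2 k x + (2*A*B*pPsi k x + A^2*pDPsi k x) ≤ B^2*pW2 k x := by
  have hw : 0 < pW2 k x := by
    rw [pW2]
    exact div_pos (mul_pos (pow_pos hk 2) (pow_pos (pE_pos k x) 2))
      (pow_pos (one_add_pE_pos k x) 4)
  have hr := hrel hk hx
  rw [← mul_le_mul_iff_of_pos_right hw]
  nlinarith [sq_nonneg (B * pW2 k x - A * pPsi k x), sq_nonneg A, sq_nonneg B]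

lemma pPsi_nonneg {k x : ℝ} (hk : 0 < k) (hx : 0 < x) : 0 ≤ pPsi k x := by
  rw [pPsi]
  have h1 := one_sub_pE_pos hk hx
  have h2 := one_add_pE_pos k x
  have h3 := pE_pos k x
  positivity

lemma cube_ge_one (k x : ℝ) : 1 ≤ (1 + pE k x)^3 := by
  have h := pE_pos k x
  nlinarith [sq_nonneg (pE k x), mul_pos h h, mul_pos (mul_pos h h) h]

lemma pPsi_mul_x_le {k x : ℝ} (hk : 0 < k) (hx : 0 < x) :
    pPsi k x * x ≤ k^2/2 * pE k x := by
  have h1 := one_sub_pE_pos hk hx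
  have h2 := one_add_pE_pos k x
  have h3 := pE_pos k x
  have h4 := one_sub_pE_ge hk (le_of_lt hx)
  have h5 := cube_ge_one k x
  rw [pPsi, div_mul_eq_mul_div, div_le_iff₀ (by positivity)]
  have key : k^3 * pE k x^2 * x * 1 ≤ k^2/2*pE k x * (2*(k*x*pE k x)*1) := by
    nlinarith
  calc k^3 * pE k x^2 * x = k^3 * pE k x^2 * x * 1 := by ring
    _ ≤ k^2/2*pE k x * (2*(k*x*pE k x)*1) := key
    _ ≤ k^2/2 * pE k x * (2*(1 - pE k x)*(1 + pE k x)^3) := by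
        have hb : 2*(k*x*pE k x)*1 ≤ 2*(1 - pE k x)*(1 + pE k x)^3 := by
          have hstep : 2*(k*x*pE k x) * 1 ≤ 2*(1 - pE k x) * (1 + pE k x)^3 :=
            mul_le_mul (by linarith) h5 zero_le_one (by positivity)
          linarith
        exact mul_le_mul_of_nonneg_left hb (by positivity)

lemma pDPsi_nonpos {k x : ℝ} (hk : 0 < k) (hx : 0 < x) : pDPsi k x ≤ 0 := by
  rw [pDPsi]
  have h1 := one_sub_pE_pos hk hx
  have h2 := one_add_pE_pos k x
  have h3 := pE_pos k x
  have hq : 0 < pE k x^2 - pE k x + 1 := by nlinarith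
  have : 0 < k^4 * pE k x^2 * (pE k x^2 - pE k x + 1) := by positivity
  have hden : 0 < (1 - pE k x)^2*(1 + pE k x)^4 := by positivity
  rw [neg_div]
  exact neg_nonpos_of_nonneg (le_of_lt (div_pos this hden))

lemma pDPsi_mul_x2_le {k x : ℝ} (hk : 0 < k) (hx : 0 < x) :
    -pDPsi k x * x^2 ≤ k^2 := by
  have h1 := one_sub_pE_pos hk hx
  have h2 := one_add_pE_pos k x
  have h3 := pE_pos k x
  have h4 := one_sub_pE_ge hk (le_of_lt hx)
  have h5 : pE k x ≤ 1 := le_of_lt (by nlinarith [one_sub_pE_pos hk hx])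
  have h6 : (1:ℝ) ≤ (1 + pE k x)^4 := by
    have h := pE_pos k x
    nlinarith [sq_nonneg (pE k x), sq_nonneg (pE k x^2), mul_pos h h,
      mul_pos (mul_pos h h) h]
  rw [pDPsi, neg_div, neg_neg, div_mul_eq_mul_div, div_le_iff₀ (by positivity)]
  have hq : pE k x^2 - pE k x + 1 ≤ 1 := by nlinarith
  have hsq : (k*x*pE k x)^2 ≤ (1 - pE k x)^2 := by
    have := mul_pos (mul_pos hk hx) h3
    nlinarith
  have hE2 : 0 < pE k x ^ 2 := by positivity
  have hq0 : 0 < pE k x^2 - pE k x + 1 := by nlinarith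
  calc k^4 * pE k x^2 * (pE k x^2 - pE k x + 1) * x^2
      ≤ k^4 * pE k x^2 * 1 * x^2 := by
        have := mul_le_mul_of_nonneg_left hq (le_of_lt (by positivity : (0:ℝ) < k^4 * pE k x^2))
        nlinarith [sq_nonneg x, mul_pos hx hx]
    _ = k^2 * (k*x*pE k x)^2 := by ring
    _ ≤ k^2 * (1 - pE k x)^2 := by
        exact mul_le_mul_of_nonneg_left hsq (by positivity)
    _ ≤ k^2 * ((1 - pE k x)^2*(1 + pE k x)^4) := by
        have : (1 - pE k x)^2 * 1 ≤ (1 - pE k x)^2*(1 + pE k x)^4 :=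
          mul_le_mul_of_nonneg_left h6 (by positivity)
        nlinarith [mul_pos hk hk]

lemma continuous_pE (k : ℝ) : Continuous (pE k) := by
  unfold pE; fun_prop

lemma pE_antitone {k x y : ℝ} (hk : 0 < k) (hxy : x ≤ y) : pE k y ≤ pE k x := by
  rw [pE, pE, Real.exp_le_exp]
  nlinarith

lemma tendsto_pE_atTop {k : ℝ} (hk : 0 < k) : Tendsto (pE k) atTop (𝓝 0) := by
  have h1 : Tendsto (fun x : ℝ => k * x) atTop atTop :=
    Tendsto.const_mul_atTop hk tendsto_id
  have h2 := Real.tendsto_exp_neg_atTop_nhds_zero.comp h1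
  unfold pE
  simpa [Function.comp_def, neg_mul] using h2

lemma tendsto_pPsi_atTop {k : ℝ} (hk : 0 < k) : Tendsto (pPsi k) atTop (𝓝 0) := by
  have hE := tendsto_pE_atTop hk
  have hnum : Tendsto (fun x => k^3 * pE k x^2) atTop (𝓝 (k^3 * 0^2)) :=
    ((hE.pow 2).const_mul _)
  have hden : Tendsto (fun x => 2*(1 - pE k x)*(1 + pE k x)^3) atTop
      (𝓝 (2*(1 - 0)*(1 + 0)^3)) :=
    ((tendsto_const_nhds.sub hE).const_mul 2).mul ((tendsto_const_nhds.add hE).pow 3)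
  have := hnum.div hden (by norm_num)
  simp [Pi.div_def] at this
  exact this

lemma contOn_pPsi {k : ℝ} (hk : 0 < k) : ContinuousOn (pPsi k) (Ioi 0) := by
  show ContinuousOn (fun x => k^3 * pE k x^2 / (2*(1 - pE k x)*(1 + pE k x)^3)) (Ioi 0)
  apply ContinuousOn.div
  · exact (continuous_const.mul ((continuous_pE k).pow 2)).continuousOn
  · exact ((continuous_const.mul (continuous_const.sub (continuous_pE k))).mul
      ((continuous_const.add (continuous_pE k)).pow 3)).continuousOn
  · intro x hx
    have h1 := one_sub_pE_pos hk (mem_Ioi.mp hx)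
    have h2 := one_add_pE_pos k x
    positivity

lemma contOn_pDPsi {k : ℝ} (hk : 0 < k) : ContinuousOn (pDPsi k) (Ioi 0) := by
  show ContinuousOn
    (fun x => -(k^4 * pE k x^2 * (pE k x^2 - pE k x + 1)) / ((1 - pE k x)^2*(1 + pE k x)^4))
    (Ioi 0)
  apply ContinuousOn.div
  · exact ((continuous_const.mul ((continuous_pE k).pow 2)).mul
      ((((continuous_pE k).pow 2).sub (continuous_pE k)).add continuous_const)).neg.continuousOn
  · exact ((((continuous_const.sub (continuous_pE k)).pow 2)).mul
      ((continuous_const.add (continuous_pE k)).pow 4)).continuousOn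
  · intro x hx
    have h1 := one_sub_pE_pos hk (mem_Ioi.mp hx)
    have h2 := one_add_pE_pos k x
    positivity

lemma continuous_pW2 (k : ℝ) : Continuous (pW2 k) := by
  show Continuous (fun x => k^2 * pE k x^2 / (1 + pE k x)^4)
  apply Continuous.div
  · exact continuous_const.mul ((continuous_pE k).pow 2)
  · exact (continuous_const.add (continuous_pE k)).pow 4
  · intro x
    have h2 := one_add_pE_pos k x
    positivity

lemma pW2_le {k x : ℝ} (hk : 0 < k) (hx : 0 ≤ x) : pW2 k x ≤ k^2 * pE k x := by
  have h2 := one_add_pE_pos k x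
  have h3 := pE_pos k x
  have h5 := pE_le_one hk hx
  rw [pW2, div_le_iff₀ (by positivity)]
  have h6 : (1:ℝ) ≤ (1 + pE k x)^4 := by nlinarith [cube_ge_one k x]
  calc k^2 * pE k x^2 = (k^2 * pE k x) * pE k x := by ring
    _ ≤ (k^2 * pE k x) * 1 := by
        exact mul_le_mul_of_nonneg_left h5 (by positivity)
    _ ≤ (k^2 * pE k x) * (1 + pE k x)^4 := by
        exact mul_le_mul_of_nonneg_left h6 (by positivity)
    _ = k^2 * pE k x * (1 + pE k x)^4 := by ring

lemma pPsi_le_c {k x c : ℝ} (hk : 0 < k) (hx : 0 < x) (hc0 : 0 < c)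
    (hc : c ≤ 1 - pE k x) : pPsi k x ≤ k^3/(2*c) * pE k x := by
  have h2 := one_add_pE_pos k x
  have h3 := pE_pos k x
  have h5 : pE k x ≤ 1 := le_of_lt (pE_lt_one hk hx)
  have hcube := cube_ge_one k x
  rw [pPsi, div_le_iff₀ (by nlinarith)]
  have expand : k^3/(2*c) * pE k x * (2*(1 - pE k x)*(1 + pE k x)^3)
      = k^3 * pE k x * ((1 - pE k x)/c) * (1 + pE k x)^3 := by
    field_simp
  rw [expand]
  have h6 : (1:ℝ) ≤ (1 - pE k x)/c := (one_le_div hc0).mpr hc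
  have h7 : 0 < k^3 * pE k x := by positivity
  calc k^3 * pE k x^2 = (k^3 * pE k x) * pE k x := by ring
    _ ≤ (k^3 * pE k x) * 1 := by nlinarith
    _ ≤ (k^3 * pE k x) * (((1 - pE k x)/c) * (1 + pE k x)^3) := by
        have : (1:ℝ) ≤ ((1 - pE k x)/c) * (1 + pE k x)^3 := by nlinarith
        nlinarith
    _ = k^3 * pE k x * ((1 - pE k x)/c) * (1 + pE k x)^3 := by ring

lemma negDPsi_le_c {k x c : ℝ} (hk : 0 < k) (hx : 0 < x) (hc0 : 0 < c)
    (hc : c ≤ 1 - pE k x) : -pDPsi k x ≤ k^4/c^2 * pE k x := by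
  have h2 := one_add_pE_pos k x
  have h3 := pE_pos k x
  have h5 : pE k x ≤ 1 := le_of_lt (pE_lt_one hk hx)
  have h1 : 0 < 1 - pE k x := lt_of_lt_of_le hc0 hc
  have hq : pE k x^2 - pE k x + 1 ≤ 1 := by nlinarith
  have hq0 : 0 < pE k x^2 - pE k x + 1 := by nlinarith
  have h6 : (1:ℝ) ≤ (1 + pE k x)^4 := by nlinarith [cube_ge_one k x]
  rw [pDPsi, neg_div, neg_neg, div_le_iff₀ (by positivity)]
  rw [← mul_le_mul_iff_of_pos_right (by positivity : (0:ℝ) < c^2)]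
  have hc2 : c^2 ≤ (1 - pE k x)^2 := by nlinarith
  have key : k^4 * (pE k x^2 * (pE k x^2 - pE k x + 1)) ≤ k^4 * pE k x := by
    apply mul_le_mul_of_nonneg_left _ (by positivity : (0:ℝ) ≤ k^4)
    calc pE k x^2 * (pE k x^2 - pE k x + 1) = pE k x * (pE k x * (pE k x^2 - pE k x + 1)) := by
          ring
      _ ≤ pE k x * 1 := by
          apply mul_le_mul_of_nonneg_left _ (le_of_lt h3)
          nlinarith
      _ = pE k x := by ring
  calc k^4 * pE k x^2 * (pE k x^2 - pE k x + 1) * c^2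
      ≤ (k^4 * pE k x) * (1 - pE k x)^2 := by
        have := mul_le_mul key hc2 (sq_nonneg c) (by positivity : (0:ℝ) ≤ k^4 * pE k x)
        nlinarith [this]
    _ ≤ (k^4 * pE k x) * ((1 - pE k x)^2 * (1 + pE k x)^4) := by
        apply mul_le_mul_of_nonneg_left _ (by positivity : (0:ℝ) ≤ k^4 * pE k x)
        exact le_mul_of_one_le_right (sq_nonneg _) h6
    _ = k^4/c^2 * pE k x * ((1 - pE k x)^2*(1 + pE k x)^4) * c^2 := by
        field_simp

set_option maxHeartbeats 1600000 in
/-- half-line Poincaré inequality: for `h : [0,∞) → ℝ`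
continuously differentiable with `h` and `h'` bounded,
`∫_0^∞ (h - h(0))² w² ≤ (4/(3k²)) ∫_0^∞ (h')² w²`. -/
theorem half_line_poincare
    (ν b a : ℝ) (hν : 0 < ν) (hb : 0 < b) (ha : a ∈ Set.Ioo (0 : ℝ) 1)
    (h : ℝ → ℝ) (hh : ContDiffOn ℝ 1 h (Set.Ici 0))
    (hbdd : ∃ M : ℝ, ∀ x ∈ Set.Ici (0 : ℝ), |h x| ≤ M)
    (hbdd' : ∃ M : ℝ, ∀ x ∈ Set.Ici (0 : ℝ), |derivWithin h (Set.Ici 0) x| ≤ M) :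
    ∫ x in Set.Ioi (0 : ℝ), (h x - h 0) ^ 2 * (twW ν b x) ^ 2
    ≤ (4 / (3 * waveK ν b ^ 2))
        * ∫ x in Set.Ioi (0 : ℝ), (derivWithin h (Set.Ici 0) x) ^ 2 * (twW ν b x) ^ 2 := by
  obtain ⟨M, hM⟩ := hbdd
  obtain ⟨Md, hMd⟩ := hbdd'
  have hk : 0 < waveK ν b := by
    rw [waveK]
    apply Real.sqrt_pos.mpr
    positivity
  have htw : ∀ x : ℝ, (twW ν b x)^2 = pW2 (waveK ν b) x := by
    intro x
    have h2 : (0:ℝ) < 1 + Real.exp (-(waveK ν b) * x) := by positivity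
    rw [twW, twProfile, pW2, pE]
    field_simp
    ring
  simp only [htw]
  set k := waveK ν b with hkdef
  have hk' : k ≠ 0 := ne_of_gt hk
  set gd := derivWithin h (Set.Ici (0:ℝ)) with hgddef
  -- basic bounds
  have hM0 : 0 ≤ M := le_trans (abs_nonneg _) (hM 0 self_mem_Ici)
  have hMd0 : 0 ≤ Md := le_trans (abs_nonneg _) (hMd 0 self_mem_Ici)
  have hgb : ∀ x ∈ Ici (0:ℝ), |h x - h 0| ≤ 2*M := by
    intro x hx
    have h1 := hM x hx
    have h2 := hM 0 self_mem_Ici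
    have := abs_sub (h x) (h 0)
    linarith
  have hglin : ∀ x ∈ Ici (0:ℝ), |h x - h 0| ≤ Md * x := by
    intro x hx
    have := Convex.norm_image_sub_le_of_norm_derivWithin_le (𝕜 := ℝ)
      (hh.differentiableOn one_ne_zero)
      (fun y hy => by simpa [Real.norm_eq_abs] using hMd y hy)
      (convex_Ici 0) self_mem_Ici hx
    simpa [Real.norm_eq_abs, abs_of_nonneg (mem_Ici.mp hx)] using this
  have hgdc : ContinuousOn gd (Ici 0) :=
    hh.continuousOn_derivWithin (uniqueDiffOn_Ici 0) le_rfl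
  have hgc : ContinuousOn (fun x => h x - h 0) (Ici 0) :=
    hh.continuousOn.sub continuousOn_const
  have hdAt : ∀ x ∈ Ioi (0:ℝ), HasDerivAt (fun y => h y - h 0) (gd x) x := by
    intro x hx
    have hxpos : (0:ℝ) < x := hx
    have hmem : Ici (0:ℝ) ∈ 𝓝 x := Ici_mem_nhds hxpos
    have hdw : DifferentiableWithinAt ℝ h (Ici 0) x :=
      (hh.differentiableOn one_ne_zero) x (le_of_lt hxpos)
    have hda : DifferentiableAt ℝ h x := hdw.differentiableAt hmem
    have heq : gd x = deriv h x := by rw [hgddef, derivWithin_of_mem_nhds hmem]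
    rw [heq]
    exact hda.hasDerivAt.sub_const (h 0)
  clear_value k gd
  -- F and its derivative
  obtain ⟨F, hFdef⟩ : ∃ F : ℝ → ℝ, F = fun x => (h x - h 0)^2 * pPsi k x := ⟨_, rfl⟩
  obtain ⟨Fd, hFddef⟩ : ∃ Fd : ℝ → ℝ, Fd = fun x =>
    2*(h x - h 0)*gd x*pPsi k x + (h x - h 0)^2*pDPsi k x := ⟨_, rfl⟩
  have hFderiv : ∀ x ∈ Ioi (0:ℝ), HasDerivAt F (Fd x) x := by
    intro x hx
    have hxpos : (0:ℝ) < x := hx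
    rw [hFdef, hFddef]
    exact (((hdAt x hx).pow 2).mul (hasDerivAt_pPsi hk hxpos)).congr_deriv (by simp only [Pi.pow_apply]; ring)
  have hF0 : F 0 = 0 := by simp [hFdef]
  -- continuity of F at 0 from the right
  have hpE0 : pE k 0 = 1 := by rw [pE]; simp
  have hslope : Tendsto (fun x => (h x - h 0)/x) (𝓝[>] (0:ℝ)) (𝓝 (gd 0)) := by
    have hdw0 : HasDerivWithinAt h (gd 0) (Ici 0) 0 := by
      rw [hgddef]
      exact ((hh.differentiableOn one_ne_zero) 0 self_mem_Ici).hasDerivWithinAt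
    rw [hasDerivWithinAt_iff_tendsto_slope, Ici_sdiff_left] at hdw0
    exact hdw0.congr fun x => by rw [slope_def_field, sub_zero]
  have hqslope : Tendsto (fun x => (1 - pE k x)/x) (𝓝[>] (0:ℝ)) (𝓝 k) := by
    have hq : HasDerivAt (fun y => 1 - pE k y) k 0 := by
      refine ((hasDerivAt_const (0:ℝ) (1:ℝ)).sub (hasDerivAt_pE k 0)).congr_deriv ?_
      rw [hpE0]; ring
    have hqw := hq.hasDerivWithinAt (s := Ici 0)
    rw [hasDerivWithinAt_iff_tendsto_slope, Ici_sdiff_left] at hqw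
    refine hqw.congr fun x => ?_
    rw [slope_def_field, hpE0, sub_zero]
    ring_nf
  have hxratio : Tendsto (fun x => x/(1 - pE k x)) (𝓝[>] (0:ℝ)) (𝓝 k⁻¹) := by
    have h2 := hqslope.inv₀ hk'
    exact h2.congr fun x => by rw [inv_div]
  have hgz : Tendsto (fun x => h x - h 0) (𝓝[>] (0:ℝ)) (𝓝 0) := by
    have hc : ContinuousWithinAt h (Ici 0) 0 := hh.continuousOn 0 self_mem_Ici
    have h2 : Tendsto h (𝓝[>] (0:ℝ)) (𝓝 (h 0)) :=
      hc.mono_left (nhdsWithin_mono 0 Ioi_subset_Ici_self)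
    simpa using h2.sub_const (h 0)
  have hAcont : Tendsto (fun x => k^3*pE k x^2/(2*(1 + pE k x)^3)) (𝓝[>] (0:ℝ))
      (𝓝 (k^3*pE k 0^2/(2*(1 + pE k 0)^3))) := by
    have hc : Continuous (fun x => k^3*pE k x^2/(2*(1 + pE k x)^3)) := by
      apply Continuous.div
      · exact continuous_const.mul ((continuous_pE k).pow 2)
      · exact continuous_const.mul ((continuous_const.add (continuous_pE k)).pow 3)
      · intro x; have := one_add_pE_pos k x; positivity
    exact (hc.tendsto 0).mono_left nhdsWithin_le_nhds
  have hFtend : Tendsto F (𝓝[>] (0:ℝ)) (𝓝 0) := by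
    have hcomb := ((hslope.mul hgz).mul hxratio).mul hAcont
    have hlim : gd 0 * 0 * k⁻¹ * (k^3*pE k 0^2/(2*(1 + pE k 0)^3)) = 0 := by ring
    rw [hlim] at hcomb
    refine hcomb.congr' ?_
    filter_upwards [self_mem_nhdsWithin] with x hx
    have hxpos : (0:ℝ) < x := hx
    have h1 : 1 - pE k x ≠ 0 := ne_of_gt (one_sub_pE_pos hk hxpos)
    have h2 : (0:ℝ) < 1 + pE k x := one_add_pE_pos k x
    simp only [hFdef]
    rw [pPsi]
    field_simp
  have hFcont : ContinuousWithinAt F (Ici 0) 0 := by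
    rw [← Ioi_insert, continuousWithinAt_insert_self, ContinuousWithinAt, hF0]
    exact hFtend
  -- limit of F at infinity
  have hFtop : Tendsto F atTop (𝓝 0) := by
    have hupper : Tendsto (fun x => (4*M^2) * pPsi k x) atTop (𝓝 0) := by
      simpa using (tendsto_pPsi_atTop hk).const_mul (4*M^2)
    refine tendsto_of_tendsto_of_tendsto_of_le_of_le' tendsto_const_nhds hupper ?_ ?_
    · filter_upwards [eventually_gt_atTop (0:ℝ)] with x hx
      have := pPsi_nonneg hk hx
      simp only [hFdef]
      positivity
    · filter_upwards [eventually_gt_atTop (0:ℝ)] with x hx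
      simp only [hFdef]
      have hb2 := hgb x (le_of_lt hx)
      have hpn := pPsi_nonneg hk hx
      have hsq : (h x - h 0)^2 ≤ (2*M)^2 := by
        rw [← sq_abs]
        exact pow_le_pow_left₀ (abs_nonneg _) hb2 2
      nlinarith
  -- integrability of Fd
  have hgX : ContinuousOn (fun x => h x - h 0) (Ioi 0) := hgc.mono Ioi_subset_Ici_self
  have hgdX : ContinuousOn gd (Ioi 0) := hgdc.mono Ioi_subset_Ici_self
  have hFdcontOn : ContinuousOn Fd (Ioi 0) := by
    simp only [hFddef]
    exact (((continuousOn_const.mul hgX).mul hgdX).mul (contOn_pPsi hk)).add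
      ((hgX.pow 2).mul (contOn_pDPsi hk))
  have hexp_int : ∀ a : ℝ, IntegrableOn (fun x => pE k x) (Ioi a) := by
    intro a
    have := exp_neg_integrableOn_Ioi a hk
    unfold pE
    exact this
  have hIoc : IntegrableOn Fd (Ioc (0:ℝ) 1) := by
    have hconst : IntegrableOn (fun _ : ℝ => 2*Md^2*k^2) (Ioc (0:ℝ) 1) :=
      integrableOn_const measure_Ioc_lt_top.ne
    apply Integrable.mono' hconst
      ((hFdcontOn.mono Ioc_subset_Ioi_self).aestronglyMeasurable measurableSet_Ioc)
    rw [ae_restrict_iff' measurableSet_Ioc]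
    apply ae_of_all
    intro x hx
    obtain ⟨hx0, hx1⟩ := hx
    have hgl := hglin x (le_of_lt hx0)
    have hgd := hMd x (le_of_lt hx0)
    have hpn := pPsi_nonneg hk hx0
    have hxpsi := pPsi_mul_x_le hk hx0
    have hdp2 := pDPsi_mul_x2_le hk hx0
    have hdpn := pDPsi_nonpos hk hx0
    have hE1 := pE_le_one hk (le_of_lt hx0)
    have hEpos := pE_pos k x
    rw [Real.norm_eq_abs]
    simp only [hFddef]
    have t1 : |2*(h x - h 0)*gd x*pPsi k x| ≤ Md^2*k^2 := by
      have habs : |2*(h x - h 0)*gd x*pPsi k x|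
          = 2* |h x - h 0| * |gd x| *pPsi k x := by
        rw [abs_mul, abs_mul, abs_mul, abs_two, abs_of_nonneg hpn]
      rw [habs]
      have e1 : |h x - h 0| * |gd x| ≤ (Md*x)*Md :=
        mul_le_mul hgl hgd (abs_nonneg _) (by positivity)
      have e2 : |h x - h 0| * |gd x| *pPsi k x ≤ ((Md*x)*Md)*pPsi k x :=
        mul_le_mul_of_nonneg_right e1 hpn
      have e3 : Md*Md*(pPsi k x*x) ≤ Md*Md*(k^2/2*pE k x) :=
        mul_le_mul_of_nonneg_left hxpsi (by positivity)
      have e5 : Md*Md*(k^2/2*pE k x) ≤ Md*Md*(k^2/2*1) := by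
        apply mul_le_mul_of_nonneg_left _ (by positivity)
        nlinarith [mul_pos hk hk]
      nlinarith [e2, e3, e5]
    have t2 : |(h x - h 0)^2*pDPsi k x| ≤ Md^2*k^2 := by
      have habs : |(h x - h 0)^2*pDPsi k x| = (h x - h 0)^2*(-pDPsi k x) := by
        rw [abs_mul, abs_of_nonpos hdpn, abs_of_nonneg (sq_nonneg _)]
      rw [habs]
      have e1 : (h x - h 0)^2 ≤ (Md*x)^2 := by
        rw [← sq_abs]
        exact pow_le_pow_left₀ (abs_nonneg _) hgl 2
      have e2 : (h x - h 0)^2*(-pDPsi k x) ≤ (Md*x)^2*(-pDPsi k x) :=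
        mul_le_mul_of_nonneg_right e1 (by linarith)
      have e3 : Md^2*(-pDPsi k x*x^2) ≤ Md^2*k^2 :=
        mul_le_mul_of_nonneg_left hdp2 (by positivity)
      nlinarith [e2, e3]
    calc |2*(h x - h 0)*gd x*pPsi k x + (h x - h 0)^2*pDPsi k x|
        ≤ |2*(h x - h 0)*gd x*pPsi k x| + |(h x - h 0)^2*pDPsi k x| := abs_add_le _ _
      _ ≤ 2*Md^2*k^2 := by linarith
  have hc1 : 0 < 1 - pE k 1 := one_sub_pE_pos hk one_pos
  have hIoi1 : IntegrableOn Fd (Ioi (1:ℝ)) := by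
    set c := 1 - pE k 1 with hcdef
    set C2 : ℝ := 2*(2*M)*Md*(k^3/(2*c)) + 4*M^2*(k^4/c^2) with hC2def
    have hint : IntegrableOn (fun x => C2 * pE k x) (Ioi (1:ℝ)) :=
      (hexp_int 1).const_mul C2
    apply Integrable.mono' hint
      ((hFdcontOn.mono (Ioi_subset_Ioi zero_le_one)).aestronglyMeasurable
        measurableSet_Ioi)
    rw [ae_restrict_iff' measurableSet_Ioi]
    apply ae_of_all
    intro x hx
    have hx1 : (1:ℝ) < x := hx
    have hxpos : (0:ℝ) < x := lt_trans zero_lt_one hx1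
    have hcc : c ≤ 1 - pE k x := by
      have := pE_antitone hk (le_of_lt hx1)
      rw [hcdef]
      linarith
    have hpsi := pPsi_le_c hk hxpos hc1 hcc
    have hdpsi := negDPsi_le_c hk hxpos hc1 hcc
    have hpn := pPsi_nonneg hk hxpos
    have hdpn := pDPsi_nonpos hk hxpos
    have hEpos := pE_pos k x
    have hgb2 := hgb x (le_of_lt hxpos)
    have hgd := hMd x (le_of_lt hxpos)
    rw [Real.norm_eq_abs]
    simp only [hFddef]
    have t1 : |2*(h x - h 0)*gd x*pPsi k x| ≤ 2*(2*M)*Md*(k^3/(2*c)) * pE k x := by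
      have habs : |2*(h x - h 0)*gd x*pPsi k x|
          = 2* |h x - h 0| * |gd x| *pPsi k x := by
        rw [abs_mul, abs_mul, abs_mul, abs_two, abs_of_nonneg hpn]
      rw [habs]
      have e1 : |h x - h 0| * |gd x| ≤ (2*M)*Md :=
        mul_le_mul hgb2 hgd (abs_nonneg _) (by positivity)
      have e2 : |h x - h 0| * |gd x| *pPsi k x ≤ ((2*M)*Md)*pPsi k x :=
        mul_le_mul_of_nonneg_right e1 hpn
      have e3 : (2*M)*Md*pPsi k x ≤ (2*M)*Md*(k^3/(2*c)*pE k x) :=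
        mul_le_mul_of_nonneg_left hpsi (by positivity)
      nlinarith [e2, e3]
    have t2 : |(h x - h 0)^2*pDPsi k x| ≤ 4*M^2*(k^4/c^2) * pE k x := by
      have habs : |(h x - h 0)^2*pDPsi k x| = (h x - h 0)^2*(-pDPsi k x) := by
        rw [abs_mul, abs_of_nonpos hdpn, abs_of_nonneg (sq_nonneg _)]
      rw [habs]
      have e1 : (h x - h 0)^2 ≤ (2*M)^2 := by
        rw [← sq_abs]
        exact pow_le_pow_left₀ (abs_nonneg _) hgb2 2
      have e2 : (h x - h 0)^2*(-pDPsi k x) ≤ (2*M)^2*(-pDPsi k x) :=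
        mul_le_mul_of_nonneg_right e1 (by linarith)
      have e3 : (2*M)^2*(-pDPsi k x) ≤ (2*M)^2*(k^4/c^2*pE k x) :=
        mul_le_mul_of_nonneg_left hdpsi (by positivity)
      nlinarith [e2, e3]
    calc |2*(h x - h 0)*gd x*pPsi k x + (h x - h 0)^2*pDPsi k x|
        ≤ |2*(h x - h 0)*gd x*pPsi k x| + |(h x - h 0)^2*pDPsi k x| := abs_add_le _ _
      _ ≤ C2 * pE k x := by rw [hC2def]; nlinarith [t1, t2]
  have hFdint : IntegrableOn Fd (Ioi (0:ℝ)) := by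
    rw [← Ioc_union_Ioi_eq_Ioi (zero_le_one (α := ℝ))]
    exact hIoc.union hIoi1
  -- integrability of the weighted squares
  have hg2int : IntegrableOn (fun x => (h x - h 0)^2 * pW2 k x) (Ioi (0:ℝ)) := by
    apply Integrable.mono' ((hexp_int 0).const_mul (4*M^2*k^2))
      (((hgX.pow 2).mul (continuous_pW2 k).continuousOn).aestronglyMeasurable
        measurableSet_Ioi)
    rw [ae_restrict_iff' measurableSet_Ioi]
    apply ae_of_all
    intro x hx
    have hxpos : (0:ℝ) < x := hx
    have hwle := pW2_le hk (le_of_lt hxpos)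
    have hwpos : 0 ≤ pW2 k x := by
      rw [pW2]
      positivity
    have hEpos := pE_pos k x
    have hsq : (h x - h 0)^2 ≤ (2*M)^2 := by
      rw [← sq_abs]
      exact pow_le_pow_left₀ (abs_nonneg _) (hgb x (le_of_lt hxpos)) 2
    simp only [Real.norm_eq_abs, Pi.mul_apply, Pi.pow_apply]
    rw [abs_of_nonneg (mul_nonneg (sq_nonneg _) hwpos)]
    calc (h x - h 0)^2 * pW2 k x ≤ (2*M)^2 * pW2 k x :=
          mul_le_mul_of_nonneg_right hsq hwpos
      _ ≤ (2*M)^2 * (k^2 * pE k x) := mul_le_mul_of_nonneg_left hwle (by positivity)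
      _ = 4*M^2*k^2 * pE k x := by ring
  have hgd2int : IntegrableOn (fun x => gd x^2 * pW2 k x) (Ioi (0:ℝ)) := by
    apply Integrable.mono' ((hexp_int 0).const_mul (Md^2*k^2))
      (((hgdX.pow 2).mul (continuous_pW2 k).continuousOn).aestronglyMeasurable
        measurableSet_Ioi)
    rw [ae_restrict_iff' measurableSet_Ioi]
    apply ae_of_all
    intro x hx
    have hxpos : (0:ℝ) < x := hx
    have hwle := pW2_le hk (le_of_lt hxpos)
    have hwpos : 0 ≤ pW2 k x := by
      rw [pW2]
      positivity
    have hEpos := pE_pos k x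
    have hsq : gd x^2 ≤ Md^2 := by
      rw [← sq_abs]
      exact pow_le_pow_left₀ (abs_nonneg _) (hMd x (le_of_lt hxpos)) 2
    simp only [Real.norm_eq_abs, Pi.mul_apply, Pi.pow_apply]
    rw [abs_of_nonneg (mul_nonneg (sq_nonneg _) hwpos)]
    calc gd x^2 * pW2 k x ≤ Md^2 * pW2 k x := mul_le_mul_of_nonneg_right hsq hwpos
      _ ≤ Md^2 * (k^2 * pE k x) := mul_le_mul_of_nonneg_left hwle (by positivity)
      _ = Md^2*k^2 * pE k x := by ring
  -- fundamental theorem of calculus on the half line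
  have hFTC : ∫ x in Ioi (0:ℝ), Fd x = 0 := by
    have hres := integral_Ioi_of_hasDerivAt_of_tendsto hFcont hFderiv hFdint hFtop
    rw [hres, hF0]
    norm_num
  -- pointwise inequality
  have hpt : ∀ x ∈ Ioi (0:ℝ), 3/4*k^2*((h x - h 0)^2 * pW2 k x)
      ≤ gd x^2 * pW2 k x - Fd x := by
    intro x hx
    have hineq := pointwise_ineq hk (mem_Ioi.mp hx) (h x - h 0) (gd x)
    rw [hFddef]
    nlinarith [hineq]
  have hlhsint : IntegrableOn (fun x => 3/4*k^2*((h x - h 0)^2 * pW2 k x)) (Ioi (0:ℝ)) :=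
    hg2int.const_mul _
  have hrhsint : IntegrableOn (fun x => gd x^2 * pW2 k x - Fd x) (Ioi (0:ℝ)) :=
    hgd2int.sub hFdint
  have hmono := setIntegral_mono_on hlhsint hrhsint measurableSet_Ioi hpt
  rw [integral_sub hgd2int hFdint, hFTC, sub_zero, integral_const_mul] at hmono
  have hpos : (0:ℝ) < 4/(3*k^2) := by positivity
  calc ∫ x in Ioi (0:ℝ), (h x - h 0)^2 * pW2 k x
      = 4/(3*k^2) * (3/4*k^2 * ∫ x in Ioi (0:ℝ), (h x - h 0)^2 * pW2 k x) := by
        field_simp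
    _ ≤ 4/(3*k^2) * ∫ x in Ioi (0:ℝ), gd x^2 * pW2 k x :=
        mul_le_mul_of_nonneg_left hmono (le_of_lt hpos)
end

section
/- (Lemma 4.5, Hardy-type inequality) Let h : [0,∞) → ℝ be continuously differentiable with h and h' bounded and h(0) = 0. Then ∫_0^∞ h(x)² w'(x)² dx ≤ ∫_0^∞ h'(x)² w(x)² dx. -/
open Real MeasureTheory

namespace HalfLineHardy

open Set Filter Topology

/-- `t = exp(-kx)`. -/
noncomputable def tf (k x : ℝ) : ℝ := Real.exp (-(k * x))

lemma tf_pos (k x : ℝ) : 0 < tf k x := Real.exp_pos _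

@[fun_prop]
lemma continuous_tf (k : ℝ) : Continuous (tf k) := by
  unfold tf; fun_prop

lemma tf_le_one {k x : ℝ} (hk : 0 ≤ k) (hx : 0 ≤ x) : tf k x ≤ 1 := by
  rw [tf, Real.exp_le_one_iff]
  nlinarith

lemma tf_lt_one {k x : ℝ} (hk : 0 < k) (hx : 0 < x) : tf k x < 1 := by
  rw [tf]
  have h1 : -(k * x) < 0 := by nlinarith
  calc Real.exp (-(k*x)) < Real.exp 0 := Real.exp_lt_exp.2 h1
  _ = 1 := Real.exp_zero

lemma tf_anti {k x y : ℝ} (hk : 0 ≤ k) (hxy : x ≤ y) : tf k y ≤ tf k x := by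
  rw [tf, tf, Real.exp_le_exp]
  nlinarith

lemma hasDerivAt_tf (k x : ℝ) : HasDerivAt (tf k) (-k * tf k x) x := by
  have h1 : HasDerivAt (fun x : ℝ => -(k * x)) (-k) x := by
    simpa using ((hasDerivAt_id x).const_mul (-k))
  show HasDerivAt (fun x => Real.exp (-(k * x))) (-k * Real.exp (-(k * x))) x
  simpa [mul_comm] using h1.exp

lemma tendsto_tf {k : ℝ} (hk : 0 < k) : Tendsto (tf k) atTop (𝓝 0) := by
  have h1 : Tendsto (fun x : ℝ => k * x) atTop atTop := tendsto_id.const_mul_atTop hk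
  exact Real.tendsto_exp_neg_atTop_nhds_zero.comp h1

/-- `1 - e^{-s} ≥ s e^{-s}` i.e. `k x t ≤ 1 - t`. -/
lemma one_sub_tf {k x : ℝ} (hk : 0 ≤ k) (hx : 0 ≤ x) : k * x * tf k x ≤ 1 - tf k x := by
  have h1 := Real.add_one_le_exp (k * x)
  have h2 : tf k x * Real.exp (k * x) = 1 := by
    rw [tf, ← Real.exp_add]; simp
  nlinarith [tf_pos k x]

/-- `w` as a rational function of `t`. -/
noncomputable def Wf (k x : ℝ) : ℝ := k * tf k x / (1 + tf k x) ^ 2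

/-- `w'` as a rational function of `t`. -/
noncomputable def Wd (k x : ℝ) : ℝ :=
  -(k ^ 2 * tf k x * (1 - tf k x) / (1 + tf k x) ^ 3)

noncomputable def psiF (k s : ℝ) : ℝ := k ^ 3 * (s ^ 2 * (1 + s ^ 2)) / ((1 - s) * (1 + s) ^ 5)

noncomputable def psiD (k s : ℝ) : ℝ :=
  (k ^ 3 * (2 * s + 4 * s ^ 3) * ((1 - s) * (1 + s) ^ 5)
    - k ^ 3 * (s ^ 2 * (1 + s ^ 2)) * ((0 - 1) * (1 + s) ^ 5 + (1 - s) * (5 * (1 + s) ^ 4 * (0 + 1))))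
    / ((1 - s) * (1 + s) ^ 5) ^ 2

noncomputable def Phi (k x : ℝ) : ℝ := psiF k (tf k x)

noncomputable def PhiD (k x : ℝ) : ℝ := psiD k (tf k x) * (-k * tf k x)

lemma hasDerivAt_psiF (k : ℝ) {s : ℝ} (h1 : s ≠ 1) (h2 : s ≠ -1) :
    HasDerivAt (psiF k) (psiD k s) s := by
  have hn : HasDerivAt (fun s : ℝ => k ^ 3 * (s ^ 2 * (1 + s ^ 2)))
      (k ^ 3 * (2 * s + 4 * s ^ 3)) s := by
    have := ((hasDerivAt_pow 2 s).mul ((hasDerivAt_const s (1:ℝ)).add (hasDerivAt_pow 2 s))).const_mul (k ^ 3)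
    exact this.congr_deriv (by simp only [Pi.add_apply]; ring)
  have hd : HasDerivAt (fun s : ℝ => (1 - s) * (1 + s) ^ 5)
      ((0 - 1) * (1 + s) ^ 5 + (1 - s) * (5 * (1 + s) ^ 4 * (0 + 1))) s := by
    have hA : HasDerivAt (fun s : ℝ => 1 - s) (0 - 1) s :=
      (hasDerivAt_const s (1:ℝ)).sub (hasDerivAt_id s)
    have hB : HasDerivAt (fun s : ℝ => (1 + s) ^ 5) (5 * (1 + s) ^ 4 * (0 + 1)) s := by
      have := ((hasDerivAt_const s (1:ℝ)).add (hasDerivAt_id s)).pow 5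
      exact this.congr_deriv (by simp)
    exact hA.mul hB
  have hdne : (1 - s) * (1 + s) ^ 5 ≠ 0 := by
    apply mul_ne_zero
    · intro hc; apply h1; linarith
    · apply pow_ne_zero; intro hc; apply h2; linarith
  exact hn.div hd hdne

lemma hasDerivAt_Phi {k x : ℝ} (hk : 0 < k) (hx : 0 < x) :
    HasDerivAt (Phi k) (PhiD k x) x := by
  have h1 : tf k x ≠ 1 := ne_of_lt (tf_lt_one hk hx)
  have h2 : tf k x ≠ -1 := by have := tf_pos k x; intro hc; rw [hc] at this; linarith
  exact (hasDerivAt_psiF k h1 h2).comp x (hasDerivAt_tf k x)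

lemma psiD_eq (k : ℝ) {s : ℝ} (h0 : 0 < s) (h1 : s < 1) :
    psiD k s = 2 * k ^ 3 * s * (1 - 2*s + 4*s^2 - 2*s^3 + s^4) / ((1 - s) ^ 2 * (1 + s) ^ 6) := by
  have e1 : (1:ℝ) - s ≠ 0 := by intro hc; nlinarith
  have e2 : (1:ℝ) + s ≠ 0 := by nlinarith
  rw [psiD]
  field_simp
  ring

/-- The key pointwise inequality `F' ≤ h'² w² - h² w'²`. -/
lemma key_ineq {k x : ℝ} (hk : 0 < k) (hx : 0 < x) (H A : ℝ) :
    2 * H * A * Phi k x + H ^ 2 * PhiD k x ≤ A ^ 2 * (Wf k x) ^ 2 - H ^ 2 * (Wd k x) ^ 2 := by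
  have ht0 : 0 < tf k x := tf_pos k x
  have ht1 : tf k x < 1 := tf_lt_one hk hx
  set t := tf k x with hts
  have e1 : (1:ℝ) - t ≠ 0 := by intro hc; nlinarith
  have e2 : (1:ℝ) + t ≠ 0 := by nlinarith
  have key : A ^ 2 * (Wf k x) ^ 2 - H ^ 2 * (Wd k x) ^ 2
      - (2 * H * A * Phi k x + H ^ 2 * PhiD k x)
      = (A * Wf k x + H * (-(k ^ 2 * t * (1 + t ^ 2) / ((1 + t) ^ 3 * (1 - t))))) ^ 2 := by
    rw [Wf, Wd, Phi, PhiD, psiF, psiD, ← hts]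
    field_simp
    ring
  nlinarith [sq_nonneg (A * Wf k x + H * (-(k ^ 2 * t * (1 + t ^ 2) / ((1 + t) ^ 3 * (1 - t))))) ]

lemma twProfile_eq (ν b : ℝ) : twProfile ν b = fun x => (1 + tf (waveK ν b) x)⁻¹ := by
  funext x
  rw [twProfile, tf, neg_mul]

lemma twW_eq (ν b x : ℝ) : twW ν b x = Wf (waveK ν b) x := by
  set k := waveK ν b
  set t := tf k x with hts
  have ht0 : 0 < t := tf_pos k x
  have e2 : (1:ℝ) + t ≠ 0 := by positivity
  rw [twW, twProfile_eq, Wf]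
  beta_reduce
  field_simp
  change waveK ν b * (1 - 1 / (1 + tf (waveK ν b) x)) / (1 + tf (waveK ν b) x) = waveK ν b * tf (waveK ν b) x / (1 + tf (waveK ν b) x) ^ 2
  have e3 : (1:ℝ) + tf (waveK ν b) x ≠ 0 := e2
  rw [one_sub_div e3]
  rw [add_sub_cancel_left, mul_div_assoc', div_div, ← sq]

lemma hasDerivAt_twW (ν b x : ℝ) : HasDerivAt (twW ν b) (Wd (waveK ν b) x) x := by
  set k := waveK ν b
  set t := tf k x with hts
  have ht0 : 0 < t := tf_pos k x
  have e2 : (1:ℝ) + t ≠ 0 := by positivity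
  have h1 : HasDerivAt (fun x : ℝ => -(k * x)) (-k) x := by
    simpa using ((hasDerivAt_id x).const_mul (-k))
  have h2 : HasDerivAt (tf k) (tf k x * -k) x := by
    exact h1.exp
  have h3 : HasDerivAt (fun y => 1 + tf k y) (tf k x * -k) x := by
    exact ((hasDerivAt_const x (1:ℝ)).add h2).congr_deriv (zero_add _)
  have hP : HasDerivAt (fun y => (1 + tf k y)⁻¹) (-(tf k x * -k) / (1 + tf k x) ^ 2) x :=
    h3.inv (by rw [← hts]; positivity)
  have hW : HasDerivAt (fun y => k * (1 + tf k y)⁻¹ * (1 - (1 + tf k y)⁻¹))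
      ((k * (-(tf k x * -k) / (1 + tf k x) ^ 2)) * (1 - (1 + tf k x)⁻¹)
        + (k * (1 + tf k x)⁻¹) * (0 - (-(tf k x * -k) / (1 + tf k x) ^ 2))) x :=
    (hP.const_mul k).mul ((hasDerivAt_const x (1:ℝ)).sub hP)
  have heq : (fun y => k * (1 + tf k y)⁻¹ * (1 - (1 + tf k y)⁻¹)) = twW ν b := by
    funext y
    rw [twW, twProfile_eq]
  rw [heq] at hW
  convert hW using 1
  rw [Wd, ← hts]
  field_simp
  ring

lemma continuous_Wd (k : ℝ) : Continuous (Wd k) := by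
  apply Continuous.neg
  apply Continuous.div
  · fun_prop
  · fun_prop
  · intro x
    have := tf_pos k x
    positivity

lemma continuous_Wf (k : ℝ) : Continuous (Wf k) := by
  apply Continuous.div
  · fun_prop
  · fun_prop
  · intro x
    have := tf_pos k x
    positivity

lemma abs_Wd_le {k x : ℝ} (hk : 0 < k) (hx : 0 ≤ x) : |Wd k x| ≤ k ^ 2 * tf k x := by
  have ht0 : 0 < tf k x := tf_pos k x
  have ht1 : tf k x ≤ 1 := tf_le_one hk.le hx
  set t := tf k x
  have h1 : (0:ℝ) ≤ k ^ 2 * t * (1 - t) / (1 + t) ^ 3 := by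
    apply div_nonneg (mul_nonneg (by positivity) (by linarith)) (by positivity)
  have hp : (1:ℝ) ≤ (1 + t) ^ 3 := one_le_pow₀ (by linarith)
  rw [Wd, abs_neg, abs_of_nonneg h1, div_le_iff₀ (by positivity)]
  nlinarith [mul_le_mul_of_nonneg_left hp (show (0:ℝ) ≤ k ^ 2 * t by positivity),
    mul_nonneg (mul_nonneg (sq_nonneg k) ht0.le) ht0.le]

lemma Wf_nonneg {k x : ℝ} (hk : 0 < k) : 0 ≤ Wf k x := by
  have := tf_pos k x
  rw [Wf]; positivity

lemma Wf_le {k x : ℝ} (hk : 0 < k) : Wf k x ≤ k * tf k x := by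
  have ht0 : 0 < tf k x := tf_pos k x
  have hp : (1:ℝ) ≤ (1 + tf k x) ^ 2 := one_le_pow₀ (by linarith)
  rw [Wf, div_le_iff₀ (by positivity)]
  nlinarith [mul_le_mul_of_nonneg_left hp (show (0:ℝ) ≤ k * tf k x by positivity)]

lemma Phi_nonneg {k x : ℝ} (hk : 0 < k) (hx : 0 < x) : 0 ≤ Phi k x := by
  have ht0 : 0 < tf k x := tf_pos k x
  have ht1 : tf k x < 1 := tf_lt_one hk hx
  have h1 : (0:ℝ) < 1 - tf k x := by linarith
  rw [Phi, psiF]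
  positivity

lemma Phi_mul_le {k x : ℝ} (hk : 0 < k) (hx : 0 < x) :
    x * Phi k x ≤ 2 * k ^ 2 * tf k x := by
  have ht0 : 0 < tf k x := tf_pos k x
  have ht1 : tf k x < 1 := tf_lt_one hk hx
  have hsub : k * x * tf k x ≤ 1 - tf k x := one_sub_tf hk.le hx.le
  set t := tf k x
  have h1t : (0:ℝ) < 1 - t := by linarith
  have hp5 : (1:ℝ) ≤ (1 + t) ^ 5 := one_le_pow₀ (by linarith)
  rw [Phi, psiF, mul_comm x _, div_mul_eq_mul_div, div_le_iff₀ (by positivity)]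
  have s1 : (k * x * t) * (k ^ 2 * t * (1 + t ^ 2)) ≤ (1 - t) * (k ^ 2 * t * (1 + t ^ 2)) :=
    mul_le_mul_of_nonneg_right hsub (by positivity)
  have s2 : (1 - t) * (k ^ 2 * t * (1 + t ^ 2)) ≤ (1 - t) * (k ^ 2 * t * 2) := by
    apply mul_le_mul_of_nonneg_left _ h1t.le
    have ht2 : t ^ 2 ≤ 1 := by nlinarith
    nlinarith [mul_le_mul_of_nonneg_left ht2 (show (0:ℝ) ≤ k ^ 2 * t by positivity)]
  have s3 : 2 * k ^ 2 * t * (1 - t) * 1 ≤ 2 * k ^ 2 * t * (1 - t) * (1 + t) ^ 5 :=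
    mul_le_mul_of_nonneg_left hp5 (by positivity)
  nlinarith [s1, s2, s3]

lemma Phi_le_on {k x ε : ℝ} (hk : 0 < k) (hε : 0 < ε) (hx : ε ≤ x) :
    Phi k x ≤ 2 * k ^ 2 / ε * tf k x := by
  have hx0 : 0 < x := lt_of_lt_of_le hε hx
  have h1 := Phi_mul_le hk hx0
  have h0 := Phi_nonneg hk hx0
  rw [div_mul_eq_mul_div, le_div_iff₀ hε]
  nlinarith [mul_le_mul_of_nonneg_right hx h0]

lemma p_nonneg {t : ℝ} : 0 ≤ 1 - 2*t + 4*t^2 - 2*t^3 + t^4 := by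
  nlinarith [sq_nonneg ((1-t)^2), sq_nonneg (1 + t^2)]

lemma p_le_three {t : ℝ} (h0 : 0 ≤ t) (h1 : t ≤ 1) : 1 - 2*t + 4*t^2 - 2*t^3 + t^4 ≤ 3 := by
  have b1 : (1-t)^2 ≤ 1 := by nlinarith
  have a1 : (1-t)^4 ≤ 1 := by nlinarith [sq_nonneg (1-t), b1]
  have a2 : (1+t^2)^2 ≤ 4 := by nlinarith [sq_nonneg t, sq_nonneg (t^2)]
  nlinarith [a1, a2]

lemma psiD_nonneg {k s : ℝ} (hk : 0 < k) (h0 : 0 < s) (h1 : s < 1) : 0 ≤ psiD k s := by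
  rw [psiD_eq k h0 h1]
  have hp := p_nonneg (t := s)
  have h1s : (0:ℝ) < 1 - s := by linarith
  positivity

lemma PhiD_nonpos {k x : ℝ} (hk : 0 < k) (hx : 0 < x) : PhiD k x ≤ 0 := by
  have ht0 : 0 < tf k x := tf_pos k x
  have ht1 : tf k x < 1 := tf_lt_one hk hx
  have h1 := psiD_nonneg hk ht0 ht1
  rw [PhiD]
  have h2 : -k * tf k x ≤ 0 := by nlinarith
  exact mul_nonpos_of_nonneg_of_nonpos h1 h2

lemma neg_PhiD_le {k x ε : ℝ} (hk : 0 < k) (hε : 0 < ε) (hx : ε ≤ x) :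
    -PhiD k x ≤ 6 * k ^ 3 / (ε * (1 - tf k ε)) * tf k x := by
  have hx0 : 0 < x := lt_of_lt_of_le hε hx
  have ht0 : 0 < tf k x := tf_pos k x
  have ht1 : tf k x < 1 := tf_lt_one hk hx0
  have hτ1 : tf k ε < 1 := tf_lt_one hk hε
  have hτt : tf k x ≤ tf k ε := tf_anti hk.le hx
  have hsub : k * x * tf k x ≤ 1 - tf k x := one_sub_tf hk.le hx0.le
  have hsubε : k * ε * tf k x ≤ 1 - tf k x := by nlinarith [mul_le_mul_of_nonneg_right (mul_le_mul_of_nonneg_left hx hk.le) ht0.le]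
  set t := tf k x with htdef
  set τ := tf k ε with hτdef
  have h1t : (0:ℝ) < 1 - t := by linarith
  have h1τ : (0:ℝ) < 1 - τ := by linarith
  have h1τt : 1 - τ ≤ 1 - t := by linarith
  have hp0 : 0 ≤ 1 - 2*t + 4*t^2 - 2*t^3 + t^4 := p_nonneg
  have hp3 : 1 - 2*t + 4*t^2 - 2*t^3 + t^4 ≤ 3 := p_le_three ht0.le ht1.le
  have hp6 : (1:ℝ) ≤ (1 + t) ^ 6 := one_le_pow₀ (by linarith)
  have hval : -PhiD k x
      = 2 * k ^ 4 * t ^ 2 * (1 - 2*t + 4*t^2 - 2*t^3 + t^4) / ((1 - t) ^ 2 * (1 + t) ^ 6) := by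
    rw [PhiD, psiD_eq k ht0 ht1, ← htdef]
    ring
  rw [hval, div_mul_eq_mul_div, div_le_div_iff₀ (by positivity) (by positivity)]
  -- goal : 2k⁴t²p * (ε(1-τ)) ≤ 6k³t * ((1-t)²(1+t)^6)
  have c1 : 2 * k ^ 4 * t ^ 2 * (1 - 2*t + 4*t^2 - 2*t^3 + t^4) * (ε * (1 - τ))
      ≤ 2 * k ^ 4 * t ^ 2 * 3 * (ε * (1 - t)) := by
    have := mul_le_mul (mul_le_mul_of_nonneg_left hp3 (by positivity : (0:ℝ) ≤ 2 * k ^ 4 * t ^ 2))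
      (mul_le_mul_of_nonneg_left h1τt hε.le) (by positivity) (by positivity)
    linarith
  have c2 : 2 * k ^ 4 * t ^ 2 * 3 * (ε * (1 - t)) = 6 * k ^ 3 * t * ((k * ε * t) * (1 - t)) := by
    ring
  have c3 : 6 * k ^ 3 * t * ((k * ε * t) * (1 - t)) ≤ 6 * k ^ 3 * t * ((1 - t) * (1 - t)) := by
    apply mul_le_mul_of_nonneg_left _ (by positivity)
    exact mul_le_mul_of_nonneg_right hsubε h1t.le
  have c4 : 6 * k ^ 3 * t * ((1 - t) * (1 - t)) ≤ 6 * k ^ 3 * t * ((1 - t) ^ 2 * (1 + t) ^ 6) := by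
    apply mul_le_mul_of_nonneg_left _ (by positivity)
    nlinarith [mul_le_mul_of_nonneg_left hp6 (by positivity : (0:ℝ) ≤ (1-t)^2)]
  linarith

lemma continuousOn_Phi {k : ℝ} (hk : 0 < k) : ContinuousOn (Phi k) (Ioi 0) := by
  unfold Phi psiF
  apply ContinuousOn.div (by fun_prop : Continuous fun x => k ^ 3 * ((tf k x) ^ 2 * (1 + (tf k x) ^ 2))).continuousOn
    (by fun_prop : Continuous fun x => (1 - tf k x) * (1 + tf k x) ^ 5).continuousOn
  intro x hx
  have ht0 := tf_pos k x
  have ht1 : tf k x < 1 := tf_lt_one hk hx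
  have h1 : (0:ℝ) < 1 - tf k x := by linarith
  positivity

lemma continuousOn_PhiD {k : ℝ} (hk : 0 < k) : ContinuousOn (PhiD k) (Ioi 0) := by
  unfold PhiD psiD
  refine ContinuousOn.mul (ContinuousOn.div ?_ ?_ ?_)
    (Continuous.continuousOn (by fun_prop))
  · exact Continuous.continuousOn (by fun_prop)
  · exact Continuous.continuousOn (by fun_prop)
  intro x hx
  have ht0 := tf_pos k x
  have ht1 : tf k x < 1 := tf_lt_one hk hx
  have h1 : (0:ℝ) < 1 - tf k x := by linarith
  positivity

lemma integrableOn_tf {k : ℝ} (hk : 0 < k) (ε : ℝ) : IntegrableOn (tf k) (Ioi ε) := by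
  have h1 := exp_neg_integrableOn_Ioi ε hk
  have h2 : (fun x : ℝ => Real.exp (-k * x)) = tf k := funext fun x => by rw [tf, neg_mul]
  rwa [h2] at h1

end HalfLineHardy
set_option maxHeartbeats 1000000 in
open HalfLineHardy Set Filter Topology in
/-- Lemma 4.5, Hardy-type inequality: for `h : [0,∞) → ℝ`
continuously differentiable with `h` and `h'` bounded and `h(0) = 0`,
`∫_0^∞ h² (w')² ≤ ∫_0^∞ (h')² w²`. -/
theorem half_line_hardy
    (ν b a : ℝ) (hν : 0 < ν) (hb : 0 < b) (ha : a ∈ Set.Ioo (0 : ℝ) 1)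
    (h : ℝ → ℝ) (hh : ContDiffOn ℝ 1 h (Set.Ici 0))
    (hbdd : ∃ M : ℝ, ∀ x ∈ Set.Ici (0 : ℝ), |h x| ≤ M)
    (hbdd' : ∃ M : ℝ, ∀ x ∈ Set.Ici (0 : ℝ), |derivWithin h (Set.Ici 0) x| ≤ M)
    (h0 : h 0 = 0) :
    ∫ x in Set.Ioi (0 : ℝ), (h x) ^ 2 * (deriv (twW ν b) x) ^ 2
    ≤ ∫ x in Set.Ioi (0 : ℝ), (derivWithin h (Set.Ici 0) x) ^ 2 * (twW ν b x) ^ 2 := by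
  classical
  obtain ⟨M, hMm⟩ := hbdd
  obtain ⟨M', hM'm⟩ := hbdd'
  have hM : ∀ x : ℝ, 0 ≤ x → |h x| ≤ M := fun x hx => hMm x (Set.mem_Ici.mpr hx)
  have hM' : ∀ x : ℝ, 0 ≤ x → |derivWithin h (Set.Ici 0) x| ≤ M' := fun x hx =>
    hM'm x (Set.mem_Ici.mpr hx)
  set k := waveK ν b with hk_def
  have hk : 0 < k := by rw [hk_def, waveK]; exact Real.sqrt_pos.2 (by positivity)
  have hM0 : 0 ≤ M := le_trans (abs_nonneg _) (hM 0 le_rfl)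
  have hM'0 : 0 ≤ M' := le_trans (abs_nonneg _) (hM' 0 le_rfl)
  -- facts about h
  have hdiff : DifferentiableOn ℝ h (Ici 0) := hh.differentiableOn one_ne_zero
  have hderiv_eq : ∀ x : ℝ, 0 < x → derivWithin h (Ici 0) x = deriv h x := fun x hx =>
    derivWithin_of_mem_nhds (Ici_mem_nhds hx)
  have hhd : ∀ x : ℝ, 0 < x → HasDerivAt h (deriv h x) x := fun x hx =>
    ((hdiff x (le_of_lt hx)).differentiableAt (Ici_mem_nhds hx)).hasDerivAt
  have hcd : ContinuousOn (deriv h) (Ioi 0) := by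
    have h1 : ContinuousOn (derivWithin h (Ici 0)) (Ici 0) :=
      hh.continuousOn_derivWithin (uniqueDiffOn_Ici 0) le_rfl
    exact (h1.mono Ioi_subset_Ici_self).congr fun x hx => (hderiv_eq x hx).symm
  have hch : ContinuousOn h (Ici 0) := hh.continuousOn
  have habsd : ∀ x : ℝ, 0 < x → |deriv h x| ≤ M' := fun x hx => by
    rw [← hderiv_eq x hx]; exact hM' x (le_of_lt hx)
  have hlin : ∀ x : ℝ, 0 ≤ x → |h x| ≤ M' * x := by
    intro x hx
    have h1 := Convex.norm_image_sub_le_of_norm_derivWithin_le hdiff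
      (fun y hy => by simpa using hM' y (Set.mem_Ici.mp hy)) (convex_Ici 0) (self_mem_Ici (a := (0:ℝ))) hx
    simpa [h0, abs_of_nonneg hx] using h1
  -- the two integrands
  set f1 : ℝ → ℝ := fun x => (h x) ^ 2 * (Wd k x) ^ 2 with hf1
  set f2 : ℝ → ℝ := fun x => (deriv h x) ^ 2 * (Wf k x) ^ 2 with hf2
  have hWd_eq : deriv (twW ν b) = Wd k := funext fun x => (hasDerivAt_twW ν b x).deriv
  have hI1 : ∫ x in Ioi (0:ℝ), (h x) ^ 2 * (deriv (twW ν b) x) ^ 2 = ∫ x in Ioi (0:ℝ), f1 x := by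
    rw [hWd_eq]
  have hI2 : ∫ x in Ioi (0:ℝ), (derivWithin h (Ici 0) x) ^ 2 * (twW ν b x) ^ 2
      = ∫ x in Ioi (0:ℝ), f2 x := by
    apply setIntegral_congr_fun measurableSet_Ioi
    intro x hx
    have hx0 : (0:ℝ) < x := hx
    simp only [hf2]
    rw [hderiv_eq x hx0, twW_eq]
  rw [hI1, hI2]
  -- integrability
  have htsq : ∀ x : ℝ, (tf k x) ^ 2 = Real.exp (-(2*k) * x) := by
    intro x; rw [tf, sq, ← Real.exp_add]; congr 1; ring
  have hexp2 : IntegrableOn (fun x => Real.exp (-(2*k) * x)) (Ioi (0:ℝ)) :=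
    exp_neg_integrableOn_Ioi 0 (by positivity)
  have int1 : IntegrableOn f1 (Ioi (0:ℝ)) := by
    apply Integrable.mono' (hexp2.const_mul (M ^ 2 * k ^ 4))
    · apply ContinuousOn.aestronglyMeasurable _ measurableSet_Ioi
      exact ((hch.mono Ioi_subset_Ici_self).pow 2).mul ((continuous_Wd k).continuousOn.pow 2)
    · filter_upwards [ae_restrict_mem measurableSet_Ioi] with x hx
      have hx0 : (0:ℝ) < x := hx
      have h1 : |h x| ≤ M := hM x hx0.le
      have h2 : |Wd k x| ≤ k ^ 2 * tf k x := abs_Wd_le hk hx0.le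
      have ht0 := tf_pos k x
      have e1 : ‖f1 x‖ = (h x) ^ 2 * (Wd k x) ^ 2 := by
        rw [Real.norm_eq_abs, abs_of_nonneg (by positivity)]
      rw [e1]
      calc (h x) ^ 2 * (Wd k x) ^ 2 = |h x| ^ 2 * |Wd k x| ^ 2 := by rw [sq_abs, sq_abs]
      _ ≤ M ^ 2 * (k ^ 2 * tf k x) ^ 2 :=
          mul_le_mul (pow_le_pow_left₀ (abs_nonneg _) h1 2)
            (pow_le_pow_left₀ (abs_nonneg _) h2 2) (by positivity) (by positivity)
      _ = M ^ 2 * k ^ 4 * (tf k x) ^ 2 := by ring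
      _ = M ^ 2 * k ^ 4 * Real.exp (-(2*k) * x) := by rw [htsq]
  have int2 : IntegrableOn f2 (Ioi (0:ℝ)) := by
    apply Integrable.mono' (hexp2.const_mul (M' ^ 2 * k ^ 2))
    · apply ContinuousOn.aestronglyMeasurable _ measurableSet_Ioi
      exact (hcd.pow 2).mul ((continuous_Wf k).continuousOn.pow 2)
    · filter_upwards [ae_restrict_mem measurableSet_Ioi] with x hx
      have hx0 : (0:ℝ) < x := hx
      have h1 : |deriv h x| ≤ M' := habsd x hx0
      have h2 : |Wf k x| ≤ k * tf k x := by
        rw [abs_of_nonneg (Wf_nonneg hk)]; exact Wf_le hk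
      have ht0 := tf_pos k x
      have e1 : ‖f2 x‖ = (deriv h x) ^ 2 * (Wf k x) ^ 2 := by
        rw [Real.norm_eq_abs, abs_of_nonneg (by positivity)]
      rw [e1]
      calc (deriv h x) ^ 2 * (Wf k x) ^ 2 = |deriv h x| ^ 2 * |Wf k x| ^ 2 := by
            rw [sq_abs, sq_abs]
      _ ≤ M' ^ 2 * (k * tf k x) ^ 2 :=
          mul_le_mul (pow_le_pow_left₀ (abs_nonneg _) h1 2)
            (pow_le_pow_left₀ (abs_nonneg _) h2 2) (by positivity) (by positivity)
      _ = M' ^ 2 * k ^ 2 * (tf k x) ^ 2 := by ring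
      _ = M' ^ 2 * k ^ 2 * Real.exp (-(2*k) * x) := by rw [htsq]
  have intD : IntegrableOn (fun x => f2 x - f1 x) (Ioi (0:ℝ)) := int2.sub int1
  suffices hDpos : 0 ≤ ∫ x in Ioi (0:ℝ), (f2 x - f1 x) by
    rw [integral_sub int2 int1] at hDpos; linarith
  -- the boundary function F and its derivative
  set F : ℝ → ℝ := fun x => (h x) ^ 2 * Phi k x with hFdef
  set F' : ℝ → ℝ := fun x => 2 * (h x) * (deriv h x) * Phi k x + (h x) ^ 2 * PhiD k x
    with hF'def
  have hFderiv : ∀ x : ℝ, 0 < x → HasDerivAt F (F' x) x := by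
    intro x hx
    have h1 := ((hhd x hx).pow 2).mul (hasDerivAt_Phi hk hx)
    refine h1.congr_deriv ?_
    push_cast
    simp only [hF'def, Pi.pow_apply]
    ring
  have hFtend : Tendsto F atTop (𝓝 0) := by
    apply squeeze_zero' (g := fun x => 2 * M ^ 2 * k ^ 2 * tf k x)
    · filter_upwards [eventually_gt_atTop 0] with x hx
      exact mul_nonneg (by positivity) (Phi_nonneg hk hx)
    · filter_upwards [eventually_ge_atTop 1] with x hx
      have hx0 : (0:ℝ) < x := lt_of_lt_of_le one_pos hx
      have h1 : Phi k x ≤ 2 * k ^ 2 / 1 * tf k x := Phi_le_on hk one_pos hx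
      have h2 : (h x) ^ 2 ≤ M ^ 2 := by
        have := hM x hx0.le
        nlinarith [abs_nonneg (h x), sq_abs (h x)]
      have h3 : 0 ≤ Phi k x := Phi_nonneg hk hx0
      have ht0 := tf_pos k x
      calc (h x) ^ 2 * Phi k x ≤ M ^ 2 * (2 * k ^ 2 / 1 * tf k x) :=
            mul_le_mul h2 h1 h3 (by positivity)
      _ = 2 * M ^ 2 * k ^ 2 * tf k x := by ring
    · have := (tendsto_tf hk).const_mul (2 * M ^ 2 * k ^ 2)
      simpa using this
  -- the per-ε estimate
  set C₀ : ℝ := M' ^ 2 * k ^ 2 + M ^ 2 * k ^ 4 with hC₀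
  set C₁ : ℝ := 2 * M' ^ 2 * k ^ 2 with hC₁
  have main : ∀ ε ∈ Ioc (0:ℝ) 1, -(C₀ + C₁) * ε ≤ ∫ x in Ioi (0:ℝ), (f2 x - f1 x) := by
    rintro ε ⟨hε0, hε1⟩
    have hτ1 : tf k ε < 1 := tf_lt_one hk hε0
    have hτ0 : 0 < tf k ε := tf_pos k ε
    set Cε : ℝ := 2 * (M * M') * (2 * k ^ 2 / ε) + M ^ 2 * (6 * k ^ 3 / (ε * (1 - tf k ε))) with hCε
    have hF'cont : ContinuousOn F' (Ioi (0:ℝ)) := by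
      apply ContinuousOn.add
      · exact ((((continuousOn_const (c := (2:ℝ))).mul (hch.mono Ioi_subset_Ici_self)).mul
          hcd).mul (continuousOn_Phi hk))
      · exact ((hch.mono Ioi_subset_Ici_self).pow 2).mul (continuousOn_PhiD hk)
    have hF'int : IntegrableOn F' (Ioi ε) := by
      apply Integrable.mono' ((integrableOn_tf hk ε).const_mul Cε)
      · apply ContinuousOn.aestronglyMeasurable _ measurableSet_Ioi
        exact hF'cont.mono (fun x hx => lt_trans hε0 hx)
      · filter_upwards [ae_restrict_mem measurableSet_Ioi] with x hx
        have hεx : ε ≤ x := le_of_lt hx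
        have hx0 : 0 < x := lt_of_lt_of_le hε0 hεx
        have b1 : Phi k x ≤ 2 * k ^ 2 / ε * tf k x := Phi_le_on hk hε0 hεx
        have b2 : -PhiD k x ≤ 6 * k ^ 3 / (ε * (1 - tf k ε)) * tf k x := neg_PhiD_le hk hε0 hεx
        have b3 : 0 ≤ Phi k x := Phi_nonneg hk hx0
        have b4 : PhiD k x ≤ 0 := PhiD_nonpos hk hx0
        have ht0 := tf_pos k x
        have hHA : |h x * deriv h x| ≤ M * M' := by
          rw [abs_mul]
          exact mul_le_mul (hM x hx0.le) (habsd x hx0) (abs_nonneg _) hM0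
        have hH2 : (h x) ^ 2 ≤ M ^ 2 := by
          have := hM x hx0.le
          nlinarith [abs_nonneg (h x), sq_abs (h x)]
        have hQ0 : 0 ≤ -PhiD k x := by linarith
        have e1 : |2 * h x * deriv h x * Phi k x| = 2 * |h x * deriv h x| * Phi k x := by
          rw [show 2 * h x * deriv h x * Phi k x = 2 * (h x * deriv h x) * Phi k x by ring,
            abs_mul, abs_mul, abs_two, abs_of_nonneg b3]
        have e2 : |(h x) ^ 2 * PhiD k x| = (h x) ^ 2 * (-PhiD k x) := by
          rw [abs_mul, abs_of_nonneg (sq_nonneg _), abs_of_nonpos b4]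
        have step1 : |F' x| ≤ 2 * |h x * deriv h x| * Phi k x + (h x) ^ 2 * (-PhiD k x) := by
          simp only [hF'def]
          calc |2 * h x * deriv h x * Phi k x + (h x) ^ 2 * PhiD k x|
              ≤ |2 * h x * deriv h x * Phi k x| + |(h x) ^ 2 * PhiD k x| := abs_add_le _ _
          _ = 2 * |h x * deriv h x| * Phi k x + (h x) ^ 2 * (-PhiD k x) := by rw [e1, e2]
        have step2 : 2 * |h x * deriv h x| * Phi k x
            ≤ 2 * (M * M') * (2 * k ^ 2 / ε * tf k x) := by
          apply mul_le_mul _ b1 b3 (by positivity)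
          have := abs_nonneg (h x * deriv h x)
          linarith
        have step3 : (h x) ^ 2 * (-PhiD k x)
            ≤ M ^ 2 * (6 * k ^ 3 / (ε * (1 - tf k ε)) * tf k x) :=
          mul_le_mul hH2 b2 hQ0 (sq_nonneg M)
        rw [Real.norm_eq_abs]
        have efin : 2 * (M * M') * (2 * k ^ 2 / ε * tf k x)
            + M ^ 2 * (6 * k ^ 3 / (ε * (1 - tf k ε)) * tf k x) = Cε * tf k x := by
          rw [hCε]; ring
        rw [← efin]
        linarith
    have hEQ : ∫ x in Ioi ε, F' x = 0 - F ε :=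
      integral_Ioi_of_hasDerivAt_of_tendsto
        ((hFderiv ε hε0).continuousAt.continuousWithinAt)
        (fun x hx => hFderiv x (lt_trans hε0 hx)) hF'int hFtend
    have hmono : ∫ x in Ioi ε, F' x ≤ ∫ x in Ioi ε, (f2 x - f1 x) := by
      apply setIntegral_mono_on hF'int (intD.mono_set (Ioi_subset_Ioi hε0.le)) measurableSet_Ioi
      intro x hx
      have hx0 : 0 < x := lt_trans hε0 hx
      have := key_ineq hk hx0 (h x) (deriv h x)
      simpa only [hf1, hf2, hF'def] using this
    have hsplit : ∫ x in Ioi (0:ℝ), (f2 x - f1 x)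
        = (∫ x in Ioc (0:ℝ) ε, (f2 x - f1 x)) + ∫ x in Ioi ε, (f2 x - f1 x) := by
      rw [← setIntegral_union (Ioc_disjoint_Ioi le_rfl) measurableSet_Ioi
        (intD.mono_set Ioc_subset_Ioi_self) (intD.mono_set (Ioi_subset_Ioi hε0.le)),
        Ioc_union_Ioi_eq_Ioi hε0.le]
    have hIoc : |∫ x in Ioc (0:ℝ) ε, (f2 x - f1 x)| ≤ C₀ * ε := by
      have hb : ∀ x ∈ Ioc (0:ℝ) ε, ‖f2 x - f1 x‖ ≤ C₀ := by
        intro x hx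
        have hx0 : 0 < x := hx.1
        have h4 : tf k x ≤ 1 := tf_le_one hk.le hx0.le
        have ht0 := tf_pos k x
        have w1 : Wf k x ≤ k := le_trans (Wf_le hk) (by nlinarith)
        have a1 : (Wf k x) ^ 2 ≤ k ^ 2 := by nlinarith [Wf_nonneg (x := x) hk]
        have w2 : |Wd k x| ≤ k ^ 2 := le_trans (abs_Wd_le hk hx0.le) (by nlinarith)
        have a2 : (Wd k x) ^ 2 ≤ k ^ 4 := by
          nlinarith [sq_abs (Wd k x), abs_nonneg (Wd k x)]
        have a3 : (deriv h x) ^ 2 ≤ M' ^ 2 := by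
          have := habsd x hx0
          nlinarith [abs_nonneg (deriv h x), sq_abs (deriv h x)]
        have a4 : (h x) ^ 2 ≤ M ^ 2 := by
          have := hM x hx0.le
          nlinarith [abs_nonneg (h x), sq_abs (h x)]
        have p1 : f1 x ≤ M ^ 2 * k ^ 4 := by
          simp only [hf1]
          exact mul_le_mul a4 a2 (sq_nonneg _) (by positivity)
        have p2 : f2 x ≤ M' ^ 2 * k ^ 2 := by
          simp only [hf2]
          exact mul_le_mul a3 a1 (sq_nonneg _) (by positivity)
        have p3 : 0 ≤ f1 x := by simp only [hf1]; positivity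
        have p4 : 0 ≤ f2 x := by simp only [hf2]; positivity
        rw [Real.norm_eq_abs, abs_le, hC₀]
        constructor <;> [linarith; linarith]
      have hmm := norm_setIntegral_le_of_norm_le_const (μ := volume) (s := Ioc (0:ℝ) ε)
        measure_Ioc_lt_top hb
      rw [Real.volume_real_Ioc_of_le hε0.le, sub_zero] at hmm
      rw [← Real.norm_eq_abs]
      exact hmm
    have hFε : F ε ≤ C₁ * ε := by
      have h1 : (h ε) ^ 2 ≤ (M' * ε) ^ 2 := by
        have := hlin ε hε0.le
        nlinarith [abs_nonneg (h ε), sq_abs (h ε)]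
      have h2 : Phi k ε ≤ 2 * k ^ 2 / ε * tf k ε := Phi_le_on hk hε0 le_rfl
      have h3 : 0 ≤ Phi k ε := Phi_nonneg hk hε0
      have h4 : tf k ε ≤ 1 := tf_le_one hk.le hε0.le
      have step : F ε ≤ (M' * ε) ^ 2 * (2 * k ^ 2 / ε * tf k ε) := by
        simp only [hFdef]
        exact mul_le_mul h1 h2 h3 (by positivity)
      have step2 : (M' * ε) ^ 2 * (2 * k ^ 2 / ε * tf k ε) ≤ C₁ * ε := by
        rw [hC₁]
        have e1 : (M' * ε) ^ 2 * (2 * k ^ 2 / ε * tf k ε)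
            = 2 * M' ^ 2 * k ^ 2 * ε * tf k ε := by
          field_simp
        rw [e1]
        nlinarith [mul_nonneg (mul_nonneg (by positivity : (0:ℝ) ≤ 2 * M' ^ 2 * k ^ 2) hε0.le)
          hτ0.le]
      linarith
    have hneg := neg_abs_le (∫ x in Ioc (0:ℝ) ε, (f2 x - f1 x))
    calc -(C₀ + C₁) * ε = -(C₀ * ε) + (0 - C₁ * ε) := by ring
    _ ≤ (∫ x in Ioc (0:ℝ) ε, (f2 x - f1 x)) + (0 - F ε) := by
        apply add_le_add
        · linarith
        · linarith
    _ = (∫ x in Ioc (0:ℝ) ε, (f2 x - f1 x)) + ∫ x in Ioi ε, F' x := by rw [hEQ]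
    _ ≤ (∫ x in Ioc (0:ℝ) ε, (f2 x - f1 x)) + ∫ x in Ioi ε, (f2 x - f1 x) := by linarith
    _ = ∫ x in Ioi (0:ℝ), (f2 x - f1 x) := hsplit.symm
  -- conclude
  have htend0 : Tendsto (fun ε : ℝ => -(C₀ + C₁) * ε) (𝓝[>] (0:ℝ)) (𝓝 0) := by
    have h1 : Tendsto (fun ε : ℝ => -(C₀ + C₁) * ε) (𝓝 (0:ℝ)) (𝓝 (-(C₀ + C₁) * 0)) :=
      (continuous_const.mul continuous_id).tendsto 0
    simpa using h1.mono_left nhdsWithin_le_nhds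
  refine le_of_tendsto htend0 ?_
  filter_upwards [Ioc_mem_nhdsGT_of_mem (by norm_num : (0:ℝ) ∈ Ico (0:ℝ) 1)] with ε hε
  exact main ε hε
end

section
/- (Whole-line Hardy-type inequality) Let h : ℝ → ℝ be continuously differentiable with h and h' bounded. Then ∫_ℝ (h(x) - h(0))² w'(x)² dx ≤ ∫_ℝ h'(x)² w(x)² dx. -/
set_option maxHeartbeats 1000000

open Real MeasureTheory

open Set Filter Topology

noncomputable def sig (k x : ℝ) : ℝ := (1 + Real.exp (-k * x))⁻¹
noncomputable def sw (k x : ℝ) : ℝ := k * sig k x * (1 - sig k x)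
noncomputable def sdW (k x : ℝ) : ℝ := k * (1 - 2 * sig k x) * sw k x
noncomputable def sA (k x : ℝ) : ℝ :=
  k^3 * (sig k x)^2 * (1 - sig k x)^2 * (2*(sig k x)^2 - 2*sig k x + 1) / (2*sig k x - 1)
noncomputable def sB (k x : ℝ) : ℝ := sA k x / sw k x

lemma one_add_exp_pos (y : ℝ) : (0:ℝ) < 1 + Real.exp y :=
  lt_trans one_pos (by linarith [Real.exp_pos y])

lemma sig_pos (k x : ℝ) : 0 < sig k x := inv_pos.mpr (one_add_exp_pos _)

lemma sig_lt_one (k x : ℝ) : sig k x < 1 := by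
  rw [sig, inv_lt_one_iff₀]
  right; linarith [Real.exp_pos (-k*x)]

lemma one_sub_sig (k x : ℝ) : 1 - sig k x = Real.exp (-k*x) * sig k x := by
  rw [sig]
  have h := (one_add_exp_pos (-k*x)).ne'
  field_simp
  ring

lemma hasDerivAt_sig (k x : ℝ) : HasDerivAt (sig k) (sw k x) x := by
  have h1 : HasDerivAt (fun y : ℝ => 1 + Real.exp (-k * y)) (Real.exp (-k*x) * (-k)) x := by
    have : HasDerivAt (fun y : ℝ => -k * y) (-k) x := by
      simpa using (hasDerivAt_id x).const_mul (-k)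
    simpa using (Real.hasDerivAt_exp (-k*x)).comp x this |>.const_add 1
  have h2 := h1.inv (one_add_exp_pos (-k*x)).ne'
  have h2' : HasDerivAt (sig k) _ x := h2
  convert h2' using 1
  rw [sw, one_sub_sig, sig]
  have h := (one_add_exp_pos (-k*x)).ne'
  field_simp

lemma hasDerivAt_sw (k x : ℝ) : HasDerivAt (sw k) (sdW k x) x := by
  have hv := hasDerivAt_sig k x
  have : HasDerivAt (fun y => k * sig k y * (1 - sig k y))
      ((k * sw k x) * (1 - sig k x) + (k * sig k x) * (0 - sw k x)) x :=
    ((hv.const_mul k).mul ((hasDerivAt_const x (1:ℝ)).sub hv))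
  have this' : HasDerivAt (sw k) _ x := this
  convert this' using 1
  rw [sdW]; ring

lemma continuous_sig (k : ℝ) : Continuous (sig k) := by
  apply Continuous.inv₀
  · continuity
  · exact fun x => (one_add_exp_pos (-k*x)).ne'

lemma continuous_sw (k : ℝ) : Continuous (sw k) := by
  unfold sw; have := continuous_sig k; continuity

lemma continuous_sdW (k : ℝ) : Continuous (sdW k) := by
  unfold sdW; have := continuous_sig k; have := continuous_sw k; continuity

lemma two_sig_sub_one (k x : ℝ) :
    2*sig k x - 1 = (1 - Real.exp (-k*x))/(1 + Real.exp (-k*x)) := by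
  rw [sig]; field_simp [(one_add_exp_pos (-k*x)).ne']; ring

lemma sig_half_lt {k x : ℝ} (hk : 0 < k) (hx : 0 < x) : 1/2 < sig k x := by
  have he : Real.exp (-k*x) < 1 := by
    rw [Real.exp_lt_one_iff]; nlinarith
  rw [sig, lt_inv_comm₀ (by norm_num) (one_add_exp_pos _)]
  linarith

lemma q_pos (k x : ℝ) : 0 < 2*(sig k x)^2 - 2*sig k x + 1 := by
  nlinarith [sq_nonneg (2*sig k x - 1)]

lemma q_le_one (k x : ℝ) : 2*(sig k x)^2 - 2*sig k x + 1 ≤ 1 := by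
  nlinarith [sig_pos k x, sig_lt_one k x]

lemma sig_sq_le_one (k x : ℝ) : (sig k x)^2 ≤ 1 := by
  nlinarith [sig_pos k x, sig_lt_one k x]

lemma one_sub_sig_sq_le_one (k x : ℝ) : (1 - sig k x)^2 ≤ 1 := by
  nlinarith [sig_pos k x, sig_lt_one k x]

lemma sA_pos {k x : ℝ} (hk : 0 < k) (hx : 0 < x) : 0 < sA k x := by
  have h1 := sig_pos k x
  have h2 := sig_lt_one k x
  have h3 := sig_half_lt hk hx
  apply div_pos _ (by linarith)
  have h4 : 0 < k^3 * (sig k x)^2 * (1 - sig k x)^2 :=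
    mul_pos (mul_pos (pow_pos hk 3) (pow_pos h1 2)) (pow_pos (by linarith) 2)
  exact mul_pos h4 (q_pos k x)

lemma sA_le_small {k x : ℝ} (hk : 0 < k) (hx : 0 < x) (hx1 : x ≤ 1) :
    sA k x ≤ 2*k^2*Real.exp k / x := by
  have h1 := sig_pos k x
  have h2 := sig_lt_one k x
  have hE1 : Real.exp (-k*x) ≤ 1 := by
    rw [Real.exp_le_one_iff]; nlinarith
  have hgeom : 1 + k*x ≤ Real.exp (k*x) := by
    have := Real.add_one_le_exp (k*x); linarith
  have hEE : Real.exp (-k*x) * Real.exp (k*x) = 1 := by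
    rw [← Real.exp_add]; simp
  have hke : Real.exp (-k) ≤ Real.exp (-k*x) := by
    apply Real.exp_le_exp.mpr; nlinarith
  have hD : k*x*Real.exp (-k)/2 ≤ 2*sig k x - 1 := by
    rw [two_sig_sub_one]
    have h0 : (0:ℝ) < 1 + Real.exp (-k*x) := one_add_exp_pos _
    rw [div_le_div_iff₀ (by norm_num) h0]
    have hnum : k*x*Real.exp (-k*x) ≤ 1 - Real.exp (-k*x) := by
      nlinarith [Real.exp_pos (-k*x)]
    have c1 : k*x*Real.exp (-k) ≤ k*x*Real.exp (-k*x) := by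
      apply mul_le_mul_of_nonneg_left hke (by positivity)
    nlinarith [Real.exp_pos (-k*x)]
  have hN : (sig k x)^2 * (1 - sig k x)^2 * (2*(sig k x)^2 - 2*sig k x + 1) ≤ 1 :=
    mul_le_one₀ (mul_le_one₀ (sig_sq_le_one k x) (sq_nonneg _) (one_sub_sig_sq_le_one k x))
      (q_pos k x).le (q_le_one k x)
  have hnum_le : k^3 * (sig k x)^2 * (1 - sig k x)^2 * (2*(sig k x)^2 - 2*sig k x + 1) ≤ k^3 := by
    have e : k^3 * (sig k x)^2 * (1 - sig k x)^2 * (2*(sig k x)^2 - 2*sig k x + 1)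
        = k^3 * ((sig k x)^2 * (1 - sig k x)^2 * (2*(sig k x)^2 - 2*sig k x + 1)) := by ring
    rw [e]
    exact mul_le_of_le_one_right (by positivity) hN
  have hDpos : 0 < 2*sig k x - 1 := by linarith [sig_half_lt hk hx]
  rw [sA, div_le_div_iff₀ hDpos hx]
  have hEk : Real.exp (-k) * Real.exp k = 1 := by rw [← Real.exp_add]; simp
  have key : 2*k^2*Real.exp k * (k*x*Real.exp (-k)/2) = k^3 * x := by
    calc 2*k^2*Real.exp k * (k*x*Real.exp (-k)/2) = k^3*x*(Real.exp (-k) * Real.exp k) := by ring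
      _ = k^3*x := by rw [hEk]; ring
  calc k^3 * (sig k x)^2 * (1 - sig k x)^2 * (2*(sig k x)^2 - 2*sig k x + 1) * x
      ≤ k^3 * x := by nlinarith
    _ = 2*k^2*Real.exp k * (k*x*Real.exp (-k)/2) := key.symm
    _ ≤ 2*k^2*Real.exp k * (2*sig k x - 1) := by
        apply mul_le_mul_of_nonneg_left hD (by positivity)

lemma sA_le_big {k x : ℝ} (hk : 0 < k) (hx : 1 ≤ x) :
    sA k x ≤ 2*k^3/(1 - Real.exp (-k)) * Real.exp (-k*x) := by
  have h1 := sig_pos k x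
  have h2 := sig_lt_one k x
  have hxpos : 0 < x := lt_of_lt_of_le one_pos hx
  have hDpos : 0 < 2*sig k x - 1 := by linarith [sig_half_lt hk hxpos]
  have hek1 : Real.exp (-k) < 1 := by rw [Real.exp_lt_one_iff]; linarith
  have hd2 : 0 < 1 - Real.exp (-k) := by linarith
  have hke : Real.exp (-k*x) ≤ Real.exp (-k) := by
    apply Real.exp_le_exp.mpr; nlinarith
  have h1v : 1 - sig k x ≤ Real.exp (-k*x) := by
    rw [one_sub_sig]
    nlinarith [Real.exp_pos (-k*x)]
  have hD : (1 - Real.exp (-k))/2 ≤ 2*sig k x - 1 := by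
    rw [two_sig_sub_one]
    have h0 : (0:ℝ) < 1 + Real.exp (-k*x) := one_add_exp_pos _
    rw [div_le_div_iff₀ (by norm_num) h0]
    nlinarith [Real.exp_pos (-k*x)]
  have hN : (sig k x)^2 * (2*(sig k x)^2 - 2*sig k x + 1) ≤ 1 :=
    mul_le_one₀ (sig_sq_le_one k x) (q_pos k x).le (q_le_one k x)
  have hsq : (1 - sig k x)^2 ≤ 1 - sig k x := by nlinarith
  have hnum : k^3 * (sig k x)^2 * (1 - sig k x)^2 * (2*(sig k x)^2 - 2*sig k x + 1)
      ≤ k^3 * Real.exp (-k*x) := by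
    have e : k^3 * (sig k x)^2 * (1 - sig k x)^2 * (2*(sig k x)^2 - 2*sig k x + 1)
        = k^3 * (((sig k x)^2 * (2*(sig k x)^2 - 2*sig k x + 1)) * (1 - sig k x)^2) := by ring
    rw [e]
    have b1 : ((sig k x)^2 * (2*(sig k x)^2 - 2*sig k x + 1)) * (1 - sig k x)^2 ≤ (1 - sig k x)^2 :=
      mul_le_of_le_one_left (sq_nonneg _) hN
    have b2 : (1 - sig k x)^2 ≤ Real.exp (-k*x) := le_trans hsq h1v
    have : ((sig k x)^2 * (2*(sig k x)^2 - 2*sig k x + 1)) * (1 - sig k x)^2 ≤ Real.exp (-k*x) :=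
      le_trans b1 b2
    exact mul_le_mul_of_nonneg_left this (by positivity)
  rw [sA, div_le_iff₀ hDpos]
  have step : 2*k^3/(1 - Real.exp (-k)) * Real.exp (-k*x) * ((1 - Real.exp (-k))/2)
      ≤ 2*k^3/(1 - Real.exp (-k)) * Real.exp (-k*x) * (2*sig k x - 1) := by
    apply mul_le_mul_of_nonneg_left hD (by positivity)
  have eq1 : 2*k^3/(1 - Real.exp (-k)) * Real.exp (-k*x) * ((1 - Real.exp (-k))/2)
      = k^3 * Real.exp (-k*x) := by
    field_simp
  linarith


lemma sw_pos {k : ℝ} (hk : 0 < k) (x : ℝ) : 0 < sw k x :=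
  mul_pos (mul_pos hk (sig_pos k x)) (by linarith [sig_lt_one k x])

lemma hasDerivAt_sA {k x : ℝ} (hk : k ≠ 0) (hx : sig k x ≠ 1/2) :
    HasDerivAt (sA k) (-((sdW k x)^2 + (sB k x)^2)) x := by
  have hvd := hasDerivAt_sig k x
  have hD : 2 * sig k x - 1 ≠ 0 := fun hc => hx (by linarith)
  have h1 : HasDerivAt (fun y => (sig k y)^2) (2 * sig k x ^ 1 * sw k x) x := hvd.pow 2
  have h2 : HasDerivAt (fun y => (1 - sig k y)^2) (2 * (1 - sig k x) ^ 1 * (0 - sw k x)) x :=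
    ((hasDerivAt_const x (1:ℝ)).sub hvd).pow 2
  have h3 : HasDerivAt (fun y => 2*(sig k y)^2 - 2*sig k y + 1)
      (2 * (2 * sig k x ^ 1 * sw k x) - 2 * sw k x) x :=
    (((hvd.pow 2).const_mul 2).sub (hvd.const_mul 2)).add_const 1
  have hden : HasDerivAt (fun y => 2 * sig k y - 1) (2 * sw k x) x :=
    (hvd.const_mul 2).sub_const 1
  have hA := (((h1.const_mul (k^3)).mul h2).mul h3).div hden hD
  have hA' : HasDerivAt (sA k) _ x := hA
  convert hA' using 1
  have hvne : sig k x ≠ 0 := (sig_pos k x).ne'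
  have hvne1 : 1 - sig k x ≠ 0 := by linarith [sig_lt_one k x]
  rw [sB, sA, sdW, sw]
  simp only [Pi.mul_apply]
  field_simp
  ring

lemma sig_neg (k x : ℝ) : sig k (-x) = 1 - sig k x := by
  have h1 := (one_add_exp_pos (-k*x)).ne'
  have he := (Real.exp_pos (-k*x)).ne'
  rw [sig, sig, show -k * -x = -(-k*x) by ring, Real.exp_neg]
  have h2 : (1 + (Real.exp (-k*x))⁻¹) ≠ 0 := by
    have := Real.exp_pos (-k*x); positivity
  field_simp
  ring

lemma sw_neg (k x : ℝ) : sw k (-x) = sw k x := by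
  rw [sw, sw, sig_neg]; ring

lemma sdW_neg (k x : ℝ) : sdW k (-x) = -sdW k x := by
  rw [sdW, sdW, sig_neg, sw_neg]; ring

lemma sw_le {k : ℝ} (hk : 0 < k) (x : ℝ) : sw k x ≤ k * Real.exp (-k*|x|) := by
  have key : ∀ y : ℝ, 0 ≤ y → sig k y * (1 - sig k y) ≤ Real.exp (-k*y) := by
    intro y hy
    have h1 := sig_pos k y
    have h2 := sig_lt_one k y
    have h3 : 1 - sig k y ≤ Real.exp (-k*y) := by
      rw [one_sub_sig]
      nlinarith [Real.exp_pos (-k*y)]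
    nlinarith
  rcases le_or_gt 0 x with hx | hx
  · rw [abs_of_nonneg hx, sw, mul_assoc]
    exact mul_le_mul_of_nonneg_left (key x hx) hk.le
  · rw [abs_of_neg hx, sw, mul_assoc]
    have hkey := key (-x) (by linarith)
    rw [sig_neg] at hkey
    have h2 : sig k x * (1 - sig k x) ≤ Real.exp (-k * -x) := by
      have heq : sig k x * (1 - sig k x) = (1 - sig k x) * (1 - (1 - sig k x)) := by ring
      rw [heq]; exact hkey
    exact mul_le_mul_of_nonneg_left h2 hk.le

lemma sdW_abs_le {k : ℝ} (hk : 0 < k) (x : ℝ) : |sdW k x| ≤ k * sw k x := by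
  have h1 := sig_pos k x
  have h2 := sig_lt_one k x
  have hsw : 0 < sw k x := mul_pos (mul_pos hk h1) (by linarith)
  rw [sdW, abs_mul, abs_mul, abs_of_pos hk, abs_of_pos hsw]
  have hle : |1 - 2*sig k x| ≤ 1 := by
    rw [abs_le]; constructor <;> nlinarith
  calc k * |1 - 2*sig k x| * sw k x = (k * sw k x) * |1 - 2*sig k x| := by ring
    _ ≤ (k * sw k x) * 1 := mul_le_mul_of_nonneg_left hle (by positivity)
    _ = k * sw k x := mul_one _

lemma integrableOn_exp_mul_Iic' {k : ℝ} (hk : 0 < k) :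
    IntegrableOn (fun x => Real.exp (k*x)) (Iic (0:ℝ)) := by
  have hmap : (volume.restrict (Ici (0:ℝ))).map Neg.neg = volume.restrict (Iic (0:ℝ)) := by
    conv => rhs; rw [← Measure.map_neg_eq_self (volume : Measure ℝ),
      measurableEmbedding_neg.restrict_map]
    simp
  rw [IntegrableOn, ← hmap, measurableEmbedding_neg.integrable_map_iff]
  have h1 : IntegrableOn (fun x => Real.exp (-k*x)) (Ioi (0:ℝ)) := by
    simpa [neg_mul] using exp_neg_integrableOn_Ioi 0 hk
  have h2 : IntegrableOn (fun x => Real.exp (-k*x)) (Ici (0:ℝ)) := by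
    rwa [integrableOn_Ici_iff_integrableOn_Ioi]
  apply h2.congr_fun _ measurableSet_Ici
  intro x _
  simp [Function.comp, neg_mul, mul_neg]

lemma integrable_of_exp_bound {k : ℝ} (hk : 0 < k) (f : ℝ → ℝ) (hf : Continuous f)
    (C : ℝ) (hC : ∀ x, |f x| ≤ C * Real.exp (-k*|x|)) : Integrable f := by
  rw [← integrableOn_univ, ← Iic_union_Ioi (a := (0:ℝ)), integrableOn_union]
  constructor
  · apply Integrable.mono' ((integrableOn_exp_mul_Iic' hk).const_mul C)
      hf.aestronglyMeasurable.restrict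
    rw [ae_restrict_iff' measurableSet_Iic]
    filter_upwards with x hx
    have := hC x
    rw [Real.norm_eq_abs]
    rwa [show -k*|x| = k*x by rw [abs_of_nonpos hx]; ring] at this
  · have hIoi : IntegrableOn (fun x => Real.exp (-k*x)) (Ioi (0:ℝ)) := by
      simpa [neg_mul] using exp_neg_integrableOn_Ioi 0 hk
    apply Integrable.mono' (hIoi.const_mul C) hf.aestronglyMeasurable.restrict
    rw [ae_restrict_iff' measurableSet_Ioi]
    filter_upwards with x hx
    have := hC x
    rw [Real.norm_eq_abs]
    rwa [abs_of_pos (show (0:ℝ) < x from hx)] at this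

lemma sq_mul_bound {k : ℝ} (hk : 0 < k) (φ ψ : ℝ → ℝ) (M C : ℝ)
    (hφ : ∀ x, |φ x| ≤ M) (hψ : ∀ x, |ψ x| ≤ C * Real.exp (-k*|x|)) :
    ∀ x, |(φ x)^2 * (ψ x)^2| ≤ (M^2*C^2) * Real.exp (-k*|x|) := by
  intro x
  have ha := abs_nonneg (φ x)
  have hb := abs_nonneg (ψ x)
  have hM0 : 0 ≤ M := le_trans ha (hφ x)
  have hE : 0 < Real.exp (-k*|x|) := Real.exp_pos _
  have hE1 : Real.exp (-k*|x|) ≤ 1 := by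
    rw [Real.exp_le_one_iff]
    nlinarith [abs_nonneg x]
  have hφ2 : (φ x)^2 ≤ M^2 := by
    rw [← sq_abs]; exact pow_le_pow_left₀ ha (hφ x) 2
  have hψ2 : (ψ x)^2 ≤ (C * Real.exp (-k*|x|))^2 := by
    rw [← sq_abs]; exact pow_le_pow_left₀ hb (hψ x) 2
  have habs : |(φ x)^2 * (ψ x)^2| = (φ x)^2 * (ψ x)^2 :=
    abs_of_nonneg (by positivity)
  rw [habs]
  have hCE : 0 ≤ C * Real.exp (-k*|x|) := le_trans hb (hψ x)
  have hMC : 0 ≤ M^2 * C^2 * Real.exp (-k*|x|) := by positivity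
  calc (φ x)^2 * (ψ x)^2 ≤ M^2 * (ψ x)^2 :=
        mul_le_mul_of_nonneg_right hφ2 (sq_nonneg _)
    _ ≤ M^2 * (C * Real.exp (-k*|x|))^2 :=
        mul_le_mul_of_nonneg_left hψ2 (sq_nonneg M)
    _ = (M^2 * C^2 * Real.exp (-k*|x|)) * Real.exp (-k*|x|) := by ring
    _ ≤ (M^2 * C^2 * Real.exp (-k*|x|)) * 1 :=
        mul_le_mul_of_nonneg_left hE1 hMC
    _ = (M^2*C^2) * Real.exp (-k*|x|) := by ring

lemma half_nonneg {k : ℝ} (hk : 0 < k) (g : ℝ → ℝ) (hg : ContDiff ℝ 1 g)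
    (hg0 : g 0 = 0) (Mg M' : ℝ) (hMg : ∀ x, |g x| ≤ Mg) (hM' : ∀ x, |deriv g x| ≤ M')
    (hint : IntegrableOn (fun x => (deriv g x)^2*(sw k x)^2 - (g x)^2*(sdW k x)^2) (Ioi 0)) :
    0 ≤ ∫ x in Ioi (0:ℝ), ((deriv g x)^2*(sw k x)^2 - (g x)^2*(sdW k x)^2) := by
  have hdg : Differentiable ℝ g := hg.differentiable one_ne_zero
  have hcg : Continuous g := hg.continuous
  have hcg' : Continuous (deriv g) := hg.continuous_deriv le_rfl
  have hMg0 : 0 ≤ Mg := le_trans (abs_nonneg _) (hMg 0)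
  have hM'0 : 0 ≤ M' := le_trans (abs_nonneg _) (hM' 0)
  set F := fun x => (deriv g x)^2*(sw k x)^2 - (g x)^2*(sdW k x)^2 with hF
  set G := fun x => (g x)^2 * sA k x with hG
  set Gd := fun x => 2*g x*deriv g x*sA k x - (g x)^2*((sdW k x)^2+(sB k x)^2) with hGdd
  have hswne : ∀ x, sw k x ≠ 0 := fun x => (sw_pos hk x).ne'
  -- |g x| ≤ M' * x for x ≥ 0
  have hgle : ∀ x : ℝ, 0 ≤ x → |g x| ≤ M' * x := by
    intro x hx
    have := convex_univ.norm_image_sub_le_of_norm_deriv_le (s := Set.univ) (f := g)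
      (fun y _ => hdg y) (fun y _ => hM' y) (mem_univ 0) (mem_univ x)
    rw [hg0, sub_zero, sub_zero] at this
    simpa [Real.norm_eq_abs, abs_of_nonneg hx] using this
  -- derivative of G on Ioi 0
  have hGd : ∀ x ∈ Ioi (0:ℝ), HasDerivAt G (Gd x) x := by
    intro x hx
    have hne : sig k x ≠ 1/2 := by
      have := sig_half_lt hk hx; intro hc; rw [hc] at this; linarith
    have h1 : HasDerivAt (fun y => (g y)^2) (2 * g x ^ 1 * deriv g x) x :=
      (hdg x).hasDerivAt.pow 2
    have := h1.mul (hasDerivAt_sA hk.ne' hne)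
    have this' : HasDerivAt G _ x := this
    convert this' using 1
    simp only [hGdd]; ring
  -- pointwise Gd ≤ F
  have hFGd : ∀ x, Gd x ≤ F x := by
    intro x
    have hA : sA k x = sB k x * sw k x := by
      rw [sB, div_mul_cancel₀ _ (hswne x)]
    have key : F x - Gd x = (deriv g x * sw k x - g x * sB k x)^2 := by
      simp only [hF, hGdd]; rw [hA]; ring
    nlinarith [sq_nonneg (deriv g x * sw k x - g x * sB k x)]
  -- continuity
  have hc1 : Continuous (fun x => k^3 * (sig k x)^2 * (1 - sig k x)^2 * (2*(sig k x)^2 - 2*sig k x + 1)) := by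
    have := continuous_sig k; continuity
  have hc2 : Continuous (fun x => 2*sig k x - 1) := by
    have := continuous_sig k; continuity
  have hcontA : ContinuousOn (sA k) (Ioi 0) := by
    have hAeq : sA k = fun x => (k^3 * (sig k x)^2 * (1 - sig k x)^2 * (2*(sig k x)^2 - 2*sig k x + 1)) / (2*sig k x - 1) := rfl
    rw [hAeq]
    exact hc1.continuousOn.div hc2.continuousOn
      (fun x hx => ne_of_gt (by linarith [sig_half_lt hk hx]))
  have hcontB : ContinuousOn (sB k) (Ioi 0) :=
    hcontA.div (continuous_sw k).continuousOn (fun x _ => hswne x)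
  have hcontGd : ContinuousOn Gd (Ioi 0) := by
    apply ContinuousOn.sub
    · exact (((continuous_const.mul hcg).mul hcg').continuousOn.mul hcontA)
    · exact ((hcg.pow 2).continuousOn.mul
        (((continuous_sdW k).pow 2).continuousOn.add (hcontB.pow 2)))
  have hcontF : Continuous F := by
    simp only [hF]
    have := continuous_sw k; have := continuous_sdW k
    continuity
  -- step estimate over [eps, R]
  have step : ∀ n : ℕ, G ((n:ℝ)+1) - G (((n:ℝ)+1)⁻¹) ≤ ∫ x in Ioc (((n:ℝ)+1)⁻¹) ((n:ℝ)+1), F x := by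
    intro n
    set ε : ℝ := ((n:ℝ)+1)⁻¹ with hε_def
    set R : ℝ := (n:ℝ)+1 with hR_def
    have hRpos : (0:ℝ) < R := by positivity
    have hR1 : (1:ℝ) ≤ R := by
      have := Nat.cast_nonneg (α := ℝ) n; simp only [hR_def]; linarith
    have hε : (0:ℝ) < ε := by positivity
    have hε1 : ε ≤ 1 := by
      rw [hε_def]; exact inv_le_one_of_one_le₀ hR1
    have hεR : ε ≤ R := le_trans hε1 hR1
    have huIcc : uIcc ε R = Icc ε R := uIcc_of_le hεR
    have hsub : Icc ε R ⊆ Ioi 0 := fun y hy => lt_of_lt_of_le hε hy.1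
    have hGdInt : IntervalIntegrable Gd volume ε R := by
      apply ContinuousOn.intervalIntegrable
      rw [huIcc]; exact hcontGd.mono hsub
    have hFInt : IntervalIntegrable F volume ε R := hcontF.intervalIntegrable ε R
    have hFTC : ∫ x in ε..R, Gd x = G R - G ε := by
      apply intervalIntegral.integral_eq_sub_of_hasDerivAt
      · intro x hx
        exact hGd x (hsub (huIcc ▸ hx))
      · exact hGdInt
    have hmono : ∫ x in ε..R, Gd x ≤ ∫ x in ε..R, F x :=
      intervalIntegral.integral_mono_on hεR hGdInt hFInt (fun x _ => hFGd x)
    calc G R - G ε = ∫ x in ε..R, Gd x := hFTC.symm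
      _ ≤ ∫ x in ε..R, F x := hmono
      _ = ∫ x in Ioc ε R, F x := intervalIntegral.integral_of_le hεR
  -- monotone family of sets
  set s : ℕ → Set ℝ := fun n => Ioc (((n:ℝ)+1)⁻¹) ((n:ℝ)+1) with hs_def
  have hsm : ∀ n, MeasurableSet (s n) := fun n => measurableSet_Ioc
  have hmono : Monotone s := by
    intro m n hmn
    have h1 : ((m:ℝ)+1) ≤ ((n:ℝ)+1) := by
      have := (Nat.cast_le (α := ℝ)).mpr hmn; linarith
    exact Ioc_subset_Ioc (inv_anti₀ (by positivity) h1) h1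
  have hunion : (⋃ n, s n) = Ioi (0:ℝ) := by
    ext y
    simp only [hs_def, mem_iUnion, mem_Ioc, mem_Ioi]
    constructor
    · rintro ⟨n, h1, h2⟩
      exact lt_trans (by positivity) h1
    · intro hy
      obtain ⟨n, hn⟩ := exists_nat_gt (max y y⁻¹)
      have hn1 : y⁻¹ < (n:ℝ)+1 := by
        have := lt_of_le_of_lt (le_max_right y y⁻¹) hn; linarith
      refine ⟨n, ?_, ?_⟩
      · exact (inv_lt_comm₀ hy (by positivity)).mp hn1
      · have : y < (n:ℝ) := lt_of_le_of_lt (le_max_left y y⁻¹) hn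
        linarith
  have hTend : Tendsto (fun n => ∫ x in s n, F x) atTop (𝓝 (∫ x in Ioi (0:ℝ), F x)) := by
    have h := tendsto_setIntegral_of_monotone hsm hmono (by rw [hunion]; exact hint)
    rwa [hunion] at h
  -- limits of boundary terms
  have hGnonneg : ∀ x : ℝ, 0 < x → 0 ≤ G x :=
    fun x hx => mul_nonneg (sq_nonneg _) (sA_pos hk hx).le
  have hGsmall : Tendsto (fun n : ℕ => G (((n:ℝ)+1)⁻¹)) atTop (𝓝 0) := by
    have hb : ∀ n : ℕ, G (((n:ℝ)+1)⁻¹) ≤ (M'^2*(2*k^2*Real.exp k)) * ((n:ℝ)+1)⁻¹ := by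
      intro n
      set ε : ℝ := ((n:ℝ)+1)⁻¹ with hε_def
      have hε : (0:ℝ) < ε := by positivity
      have hε1 : ε ≤ 1 := by
        rw [hε_def]; apply inv_le_one_of_one_le₀
        have := Nat.cast_nonneg (α := ℝ) n; linarith
      have h1 : (g ε)^2 ≤ (M'*ε)^2 := by
        have := hgle ε hε.le
        have habs : (g ε)^2 = |g ε|^2 := (sq_abs _).symm
        rw [habs]
        apply pow_le_pow_left₀ (abs_nonneg _) this
      have h2 : sA k ε ≤ 2*k^2*Real.exp k / ε := sA_le_small hk hε hε1
      calc G ε ≤ (M'*ε)^2 * sA k ε := by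
            apply mul_le_mul_of_nonneg_right h1 (sA_pos hk hε).le
        _ ≤ (M'*ε)^2 * (2*k^2*Real.exp k / ε) := by
            apply mul_le_mul_of_nonneg_left h2 (sq_nonneg _)
        _ = (M'^2*(2*k^2*Real.exp k)) * (ε^2/ε) := by ring
        _ = (M'^2*(2*k^2*Real.exp k)) * ε := by
            have hee : ε^2/ε = ε := by
              rw [sq]; exact mul_div_cancel_right₀ ε hε.ne'
            rw [hee]
    have hz : Tendsto (fun n : ℕ => (M'^2*(2*k^2*Real.exp k)) * ((n:ℝ)+1)⁻¹) atTop (𝓝 0) := by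
      have h0 : Tendsto (fun n : ℕ => ((n:ℝ)+1)⁻¹) atTop (𝓝 0) := by
        simpa [one_div] using tendsto_one_div_add_atTop_nhds_zero_nat (𝕜 := ℝ)
      simpa using h0.const_mul (M'^2*(2*k^2*Real.exp k))
    exact squeeze_zero (fun n => hGnonneg _ (by positivity)) hb hz
  have hGbig : Tendsto (fun n : ℕ => G ((n:ℝ)+1)) atTop (𝓝 0) := by
    have hb : ∀ n : ℕ, G ((n:ℝ)+1) ≤ (Mg^2*(2*k^3/(1 - Real.exp (-k)))) * Real.exp (-k*((n:ℝ)+1)) := by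
      intro n
      set R : ℝ := (n:ℝ)+1 with hR_def
      have hR1 : (1:ℝ) ≤ R := by
        have := Nat.cast_nonneg (α := ℝ) n; simp only [hR_def]; linarith
      have hRpos : (0:ℝ) < R := by positivity
      have h1 : (g R)^2 ≤ Mg^2 := by
        have := hMg R
        have habs : (g R)^2 = |g R|^2 := (sq_abs _).symm
        rw [habs]
        apply pow_le_pow_left₀ (abs_nonneg _) this
      have h2 : sA k R ≤ 2*k^3/(1 - Real.exp (-k)) * Real.exp (-k*R) := sA_le_big hk hR1
      calc G R ≤ Mg^2 * sA k R := by
            apply mul_le_mul_of_nonneg_right h1 (sA_pos hk hRpos).le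
        _ ≤ Mg^2 * (2*k^3/(1 - Real.exp (-k)) * Real.exp (-k*R)) := by
            apply mul_le_mul_of_nonneg_left h2 (sq_nonneg _)
        _ = (Mg^2*(2*k^3/(1 - Real.exp (-k)))) * Real.exp (-k*R) := by ring
    have hz : Tendsto (fun n : ℕ => (Mg^2*(2*k^3/(1 - Real.exp (-k)))) * Real.exp (-k*((n:ℝ)+1))) atTop (𝓝 0) := by
      have h1 : Tendsto (fun n : ℕ => (n:ℝ)+1) atTop atTop :=
        tendsto_atTop_add_const_right atTop 1 tendsto_natCast_atTop_atTop
      have h2 : Tendsto (fun n : ℕ => k*((n:ℝ)+1)) atTop atTop :=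
        Tendsto.const_mul_atTop hk h1
      have h3 : Tendsto (fun n : ℕ => Real.exp (-(k*((n:ℝ)+1)))) atTop (𝓝 0) :=
        Real.tendsto_exp_neg_atTop_nhds_zero.comp h2
      have h4 : Tendsto (fun n : ℕ => Real.exp (-k*((n:ℝ)+1))) atTop (𝓝 0) := by
        simpa [neg_mul] using h3
      simpa using h4.const_mul (Mg^2*(2*k^3/(1 - Real.exp (-k))))
    exact squeeze_zero (fun n => hGnonneg _ (by positivity)) hb hz
  have hlim : Tendsto (fun n : ℕ => G ((n:ℝ)+1) - G (((n:ℝ)+1)⁻¹)) atTop (𝓝 0) := by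
    simpa using hGbig.sub hGsmall
  exact le_of_tendsto_of_tendsto' hlim hTend step


/-- whole-line Hardy-type inequality: for `h ∈ C¹(ℝ)` with `h`
and `h'` bounded, `∫_ℝ (h - h(0))² (w')² ≤ ∫_ℝ (h')² w²`. -/
theorem whole_line_hardy
    (ν b a : ℝ) (hν : 0 < ν) (hb : 0 < b) (ha : a ∈ Set.Ioo (0 : ℝ) 1)
    (h : ℝ → ℝ) (hh : ContDiff ℝ 1 h)
    (hbdd : ∃ M : ℝ, ∀ x : ℝ, |h x| ≤ M)
    (hbdd' : ∃ M : ℝ, ∀ x : ℝ, |deriv h x| ≤ M) :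
    ∫ x : ℝ, (h x - h 0) ^ 2 * (deriv (twW ν b) x) ^ 2
    ≤ ∫ x : ℝ, (deriv h x) ^ 2 * (twW ν b x) ^ 2 := by
  obtain ⟨Mh, hMh⟩ := hbdd
  obtain ⟨M', hM'⟩ := hbdd'
  set k := waveK ν b with hk_def
  have hk : 0 < k := Real.sqrt_pos.mpr (by positivity)
  have htw : twW ν b = sw k := rfl
  have hdW : deriv (twW ν b) = sdW k := by
    funext x; rw [htw]; exact (hasDerivAt_sw k x).deriv
  set g := fun x => h x - h 0 with hg_def
  have hgC : ContDiff ℝ 1 g := hh.sub contDiff_const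
  have hgcont : Continuous g := hgC.continuous
  have hgd : deriv g = deriv h := by
    funext x
    simp only [hg_def]
    exact deriv_sub_const (h 0)
  have hgdcont : Continuous (deriv g) := by rw [hgd]; exact hh.continuous_deriv le_rfl
  have hgb : ∀ x, |g x| ≤ 2*Mh := by
    intro x
    calc |g x| ≤ |h x| + |h 0| := abs_sub _ _
      _ ≤ 2*Mh := by have := hMh x; have := hMh 0; linarith
  have hgdb : ∀ x, |deriv g x| ≤ M' := by intro x; rw [hgd]; exact hM' x
  -- integrands
  set F := fun x => (deriv g x)^2*(sw k x)^2 - (g x)^2*(sdW k x)^2 with hF_def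
  have hswb : ∀ x, |sw k x| ≤ k * Real.exp (-k*|x|) := by
    intro x; rw [abs_of_pos (sw_pos hk x)]; exact sw_le hk x
  have hsdWb : ∀ x, |sdW k x| ≤ k^2 * Real.exp (-k*|x|) := by
    intro x
    calc |sdW k x| ≤ k * sw k x := sdW_abs_le hk x
      _ ≤ k * (k * Real.exp (-k*|x|)) := by
          exact mul_le_mul_of_nonneg_left (sw_le hk x) hk.le
      _ = k^2 * Real.exp (-k*|x|) := by ring
  have hint1 : Integrable (fun x => (g x)^2 * (sdW k x)^2) := by
    apply integrable_of_exp_bound hk _ ((hgcont.pow 2).mul ((continuous_sdW k).pow 2)) ((2*Mh)^2*(k^2)^2)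
    exact sq_mul_bound hk g (sdW k) (2*Mh) (k^2) hgb hsdWb
  have hint2 : Integrable (fun x => (deriv g x)^2 * (sw k x)^2) := by
    apply integrable_of_exp_bound hk _ ((hgdcont.pow 2).mul ((continuous_sw k).pow 2)) (M'^2*k^2)
    exact sq_mul_bound hk (deriv g) (sw k) M' k hgdb hswb
  have hintF : Integrable F := hint2.sub hint1
  -- nonnegativity of ∫ F
  have hIoi : 0 ≤ ∫ x in Ioi (0:ℝ), F x :=
    half_nonneg hk g hgC (by simp [hg_def]) (2*Mh) M' hgb hgdb hintF.integrableOn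
  -- reflection for the left half
  set g2 := fun x => g (-x) with hg2_def
  have hg2C : ContDiff ℝ 1 g2 := hgC.comp contDiff_neg
  have hg2d : ∀ x, deriv g2 x = deriv g (-x) * (-1) := by
    intro x
    have hD : HasDerivAt g2 (deriv g (-x) * (-1)) x :=
      ((hgC.differentiable one_ne_zero) (-x)).hasDerivAt.comp x (hasDerivAt_neg x)
    exact hD.deriv
  have hFeq : ∀ x, F (-x) = (deriv g2 x)^2*(sw k x)^2 - (g2 x)^2*(sdW k x)^2 := by
    intro x
    simp only [hF_def, hg2_def]
    rw [sw_neg, sdW_neg, hg2d]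
    ring
  have hmap2 : (volume.restrict (Ioi (0:ℝ))).map Neg.neg = volume.restrict (Iio (0:ℝ)) := by
    conv => rhs; rw [← Measure.map_neg_eq_self (volume : Measure ℝ),
      measurableEmbedding_neg.restrict_map]
    simp
  have hFneg : Integrable (F ∘ Neg.neg) (volume.restrict (Ioi (0:ℝ))) := by
    rw [← measurableEmbedding_neg.integrable_map_iff, hmap2]
    exact hintF.integrableOn.mono_set Iio_subset_Iic_self
  have hintF2 : IntegrableOn (fun x => (deriv g2 x)^2*(sw k x)^2 - (g2 x)^2*(sdW k x)^2) (Ioi 0) := by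
    apply hFneg.congr
    exact ae_of_all _ (fun x => hFeq x)
  have hIio : 0 ≤ ∫ x in Iic (0:ℝ), F x := by
    have h1 := integral_comp_neg_Ioi (0:ℝ) F
    rw [neg_zero] at h1
    rw [← h1]
    have h2 : ∫ x in Ioi (0:ℝ), F (-x) =
        ∫ x in Ioi (0:ℝ), ((deriv g2 x)^2*(sw k x)^2 - (g2 x)^2*(sdW k x)^2) :=
      integral_congr_ae (ae_of_all _ (fun x => hFeq x))
    rw [h2]
    exact half_nonneg hk g2 hg2C (by simp [hg2_def, hg_def]) (2*Mh) M'
      (fun x => hgb (-x)) (fun x => by rw [hg2d]; simpa using hgdb (-x)) hintF2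
  have htotal : 0 ≤ ∫ x, F x := by
    rw [← intervalIntegral.integral_Iic_add_Ioi hintF.integrableOn hintF.integrableOn]
    linarith
  rw [hdW, htw, ← hgd]
  have hFsub := integral_sub hint2 hint1
  simp only [hF_def] at htotal
  rw [hFsub] at htotal
  have : (fun x => (h x - h 0)^2 * (sdW k x)^2) = (fun x => (g x)^2 * (sdW k x)^2) := rfl
  rw [this]
  linarith
end

section
/- (Remainder estimate) Fix y ∈ ℝ and let ṽ(x) = v(x + y) be the shifted travelling wave. For u ∈ H¹(ℝ) define the Taylor remainder R(u) = f(u + ṽ) - f(ṽ) - f'(ṽ)·u = (1/2) f''(ṽ) u² + (1/6) f'''(ṽ) u³. Then ∫_ℝ R(u)(x)·u(x) dx ≤ (4 + a)·‖u‖_H²·‖u‖_V. -/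
open Real MeasureTheory

/-- The cubic nonlinearity of the Nagumo equation. -/
noncomputable def nagF (a : ℝ) (v : ℝ) : ℝ := v * (1 - v) * (v - a)

lemma nagF_hasDerivAt (a v : ℝ) :
    HasDerivAt (nagF a) (-3 * v ^ 2 + 2 * (1 + a) * v - a) v := by
  have hfun : nagF a = fun t : ℝ => -t ^ 3 + (1 + a) * t ^ 2 - a * t := by
    funext t; simp only [nagF]; ring
  have h : HasDerivAt (fun t : ℝ => -t ^ 3 + (1 + a) * t ^ 2 - a * t)
      (-(↑(3:ℕ) * v ^ 2) + (1 + a) * (↑(2:ℕ) * v ^ 1) - a * 1) v :=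
    (((hasDerivAt_pow 3 v).neg).add ((hasDerivAt_pow 2 v).const_mul (1 + a))).sub
      ((hasDerivAt_id v).const_mul a)
  rw [hfun]
  convert h using 1
  push_cast
  ring

lemma sup_bound (u : ℝ → ℝ) (hu : Differentiable ℝ u)
    (huH : MemLp u 2 (volume : Measure ℝ))
    (huV : MemLp (deriv u) 2 (volume : Measure ℝ)) (x : ℝ) :
    (u x) ^ 2 ≤ (∫ t : ℝ, (deriv u t) ^ 2) + ∫ t : ℝ, (u t) ^ 2 := by
  have hu2 : Integrable (fun t => (u t) ^ 2) := huH.integrable_sq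
  have hv2 : Integrable (fun t => (deriv u t) ^ 2) := huV.integrable_sq
  set g' : ℝ → ℝ := fun t => 2 * u t * deriv u t with hg'def
  have hderiv : ∀ t : ℝ, HasDerivAt (fun s => (u s) ^ 2) (g' t) t := by
    intro t
    have := ((hu t).hasDerivAt).pow 2
    exact (by simpa [hg'def] using this : HasDerivAt (u ^ 2) (g' t) t)
  have hbound : ∀ t, |g' t| ≤ (deriv u t) ^ 2 + (u t) ^ 2 := by
    intro t
    calc |2 * u t * deriv u t| = 2 * |u t| * |deriv u t| := by
          rw [abs_mul, abs_mul, abs_two]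
      _ ≤ |u t| ^ 2 + |deriv u t| ^ 2 := two_mul_le_add_sq _ _
      _ = (deriv u t) ^ 2 + (u t) ^ 2 := by rw [sq_abs, sq_abs]; ring
  have hg'meas : AEStronglyMeasurable g' volume :=
    ((hu.continuous.aestronglyMeasurable).const_mul 2).mul huV.1
  have hg'int : Integrable g' := by
    refine (hv2.add hu2).mono' hg'meas (ae_of_all _ fun t => ?_)
    simpa [Real.norm_eq_abs] using hbound t
  have htend : Filter.Tendsto (fun t => (u t) ^ 2) Filter.atBot (nhds 0) :=
    tendsto_zero_of_hasDerivAt_of_integrableOn_Iic (a := x) (fun t _ => hderiv t)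
      hg'int.integrableOn hu2.integrableOn
  have hFTC : ∫ t in Set.Iic x, g' t = (u x) ^ 2 - 0 :=
    integral_Iic_of_hasDerivAt_of_tendsto
      (hderiv x).continuousAt.continuousWithinAt (fun t _ => hderiv t)
      hg'int.integrableOn htend
  have h2 : ∫ t in Set.Iic x, g' t ≤ ∫ t in Set.Iic x, |g' t| :=
    integral_mono hg'int.integrableOn hg'int.abs.integrableOn fun t => le_abs_self _
  have h3 : ∫ t in Set.Iic x, |g' t| ≤ ∫ t, |g' t| :=
    setIntegral_le_integral hg'int.abs (ae_of_all _ fun t => abs_nonneg _)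
  have h4 : ∫ t, |g' t| ≤ ∫ t, ((deriv u t) ^ 2 + (u t) ^ 2) :=
    integral_mono hg'int.abs (hv2.add hu2) fun t => hbound t
  have h5 : ∫ t, ((deriv u t) ^ 2 + (u t) ^ 2)
      = (∫ t, (deriv u t) ^ 2) + ∫ t, (u t) ^ 2 := integral_add hv2 hu2
  linarith

/-- remainder estimate: for the shifted wave `ṽ = v(· + y)` and
`u ∈ H¹(ℝ)`, the Taylor remainder `R(u) = f(u+ṽ) - f(ṽ) - f'(ṽ)u` satisfies
`⟨R(u), u⟩ ≤ (4+a) ‖u‖_H² ‖u‖_V`. -/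
theorem remainder_estimate
    (ν b a : ℝ) (hν : 0 < ν) (hb : 0 < b) (ha : a ∈ Set.Ioo (0 : ℝ) 1)
    (y : ℝ)
    (u : ℝ → ℝ) (hu : Differentiable ℝ u)
    (huH : MemLp u 2 (volume : Measure ℝ))
    (huV : MemLp (deriv u) 2 (volume : Measure ℝ))
    (R : ℝ → ℝ)
    (hR : R = fun x =>
      nagF a (u x + twProfile ν b (x + y)) - nagF a (twProfile ν b (x + y))
        - deriv (nagF a) (twProfile ν b (x + y)) * u x) :
    ∫ x : ℝ, R x * u x
    ≤ (4 + a) * (∫ x : ℝ, (u x) ^ 2)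
        * Real.sqrt ((∫ x : ℝ, (deriv u x) ^ 2) + ∫ x : ℝ, (u x) ^ 2) := by
  obtain ⟨ha0, ha1⟩ := ha
  have hu2 : Integrable (fun x => (u x) ^ 2) := huH.integrable_sq
  have hB : 0 ≤ ∫ x : ℝ, (u x) ^ 2 := integral_nonneg fun x => sq_nonneg _
  set M : ℝ := Real.sqrt ((∫ x : ℝ, (deriv u x) ^ 2) + ∫ x : ℝ, (u x) ^ 2) with hMdef
  have hM : 0 ≤ M := Real.sqrt_nonneg _
  have habs : ∀ x, |u x| ≤ M := fun x => Real.abs_le_sqrt (sup_bound u hu huH huV x)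
  have hderivF : ∀ p : ℝ, deriv (nagF a) p = -3 * p ^ 2 + 2 * (1 + a) * p - a :=
    fun p => (nagF_hasDerivAt a p).deriv
  have hw : ∀ x : ℝ, 0 < twProfile ν b (x + y) ∧ twProfile ν b (x + y) < 1 := by
    intro x
    unfold twProfile
    have he := Real.exp_pos (-(waveK ν b) * (x + y))
    constructor
    · positivity
    · rw [inv_lt_one_iff₀]
      right; linarith
  have hid : ∀ x, R x * u x
      = ((1 + a) - 3 * twProfile ν b (x + y)) * (u x) ^ 3 - (u x) ^ 4 := by
    intro x
    rw [hR]
    simp only [hderivF, nagF]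
    ring
  have hc : ∀ x, |(1 + a) - 3 * twProfile ν b (x + y)| ≤ 2 := by
    intro x
    rw [abs_le]
    constructor <;> nlinarith [(hw x).1, (hw x).2]
  have key : ∀ x, R x * u x ≤ 2 * M * (u x) ^ 2 := by
    intro x
    have hcu : ((1 + a) - 3 * twProfile ν b (x + y)) * u x ≤ 2 * M := by
      calc ((1 + a) - 3 * twProfile ν b (x + y)) * u x
          ≤ |((1 + a) - 3 * twProfile ν b (x + y)) * u x| := le_abs_self _
        _ = |(1 + a) - 3 * twProfile ν b (x + y)| * |u x| := abs_mul _ _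
        _ ≤ 2 * M := mul_le_mul (hc x) (habs x) (abs_nonneg _) (by norm_num)
    rw [hid x]
    nlinarith [sq_nonneg ((u x) ^ 2),
      mul_le_mul_of_nonneg_right hcu (sq_nonneg (u x))]
  have hnag : Continuous (nagF a) := by unfold nagF; continuity
  have htw : Continuous fun x : ℝ => twProfile ν b (x + y) := by
    unfold twProfile
    refine Continuous.inv₀ (by continuity) fun x => ?_
    have := Real.exp_pos (-(waveK ν b) * (x + y))
    positivity
  have hRcont : Continuous R := by
    rw [hR]
    simp only [hderivF]
    have hpoly : Continuous fun x : ℝ =>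
        -3 * (twProfile ν b (x + y)) ^ 2 + 2 * (1 + a) * twProfile ν b (x + y) - a := by
      fun_prop
    exact ((hnag.comp (hu.continuous.add htw)).sub (hnag.comp htw)).sub
      (hpoly.mul hu.continuous)
  have hRu_int : Integrable (fun x => R x * u x) := by
    refine (hu2.const_mul (2 * M + M ^ 2)).mono'
      ((hRcont.mul hu.continuous).aestronglyMeasurable) (ae_of_all _ fun x => ?_)
    rw [Real.norm_eq_abs, hid x]
    have hu2M : (u x) ^ 2 ≤ M ^ 2 := by
      nlinarith [habs x, abs_nonneg (u x), sq_abs (u x)]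
    have e1 : |((1 + a) - 3 * twProfile ν b (x + y)) * (u x) ^ 3| ≤ 2 * (M * (u x) ^ 2) := by
      have h3 : |u x| ^ 3 = (u x) ^ 2 * |u x| := by rw [pow_succ, sq_abs]
      rw [abs_mul, abs_pow, h3]
      nlinarith [mul_le_mul (hc x) (habs x) (abs_nonneg (u x)) (by norm_num : (0:ℝ) ≤ 2),
        sq_nonneg (u x), abs_nonneg ((1 + a) - 3 * twProfile ν b (x + y)),
        abs_nonneg (u x), habs x, hc x]
    have e2 : |(u x) ^ 4| ≤ M ^ 2 * (u x) ^ 2 := by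
      rw [abs_of_nonneg (by positivity)]
      nlinarith [sq_nonneg (u x)]
    calc |((1 + a) - 3 * twProfile ν b (x + y)) * (u x) ^ 3 - (u x) ^ 4|
        ≤ |((1 + a) - 3 * twProfile ν b (x + y)) * (u x) ^ 3| + |(u x) ^ 4| :=
          abs_sub _ _
      _ ≤ (2 * M + M ^ 2) * (u x) ^ 2 := by nlinarith [e1, e2]
  have hmono : ∫ x : ℝ, R x * u x ≤ ∫ x : ℝ, 2 * M * (u x) ^ 2 :=
    integral_mono hRu_int (hu2.const_mul (2 * M)) key
  have heq : ∫ x : ℝ, 2 * M * (u x) ^ 2 = 2 * M * ∫ x : ℝ, (u x) ^ 2 :=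
    integral_const_mul _ _
  have hfin : 2 * M * (∫ x : ℝ, (u x) ^ 2) ≤ (4 + a) * (∫ x : ℝ, (u x) ^ 2) * M := by
    nlinarith [mul_nonneg hB hM]
  linarith [hmono, heq.le, heq.ge, hfin]
end
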